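/- arXiv:1002.4280 — 4 statements merged into one kernel-verified Lean document; each statement's English description precedes it below -/
import Mathlib

section
/- The Heisenberg Lie algebra H(m) of dimension 2m+1 is capable if and only if m = 1. -/
open Module Function

universe u v

/-! ### Product of Lie algebras -/

section ProdLie

variable (k : Type) [Field k]
variable (L₁ : Type*) (L₂ : Type*) [LieRing L₁] [LieRing L₂]

instance Prod.instLieRing : LieRing (L₁ × L₂) where
  bracket x y := (⁅x.1, y.1⁆, ⁅x.2, y.2⁆)
  add_lie x y z := by ext <;> exact add_lie _ _ _
  lie_add x y z := by ext <;> exact lie_add _ _ _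
  lie_self x := by ext <;> exact lie_self _
  leibniz_lie x y z := by ext <;> exact leibniz_lie _ _ _

instance Prod.instLieAlgebra [LieAlgebra k L₁] [LieAlgebra k L₂] :
    LieAlgebra k (L₁ × L₂) where
  lie_smul c x y := by ext <;> exact lie_smul _ _ _

end ProdLie

section Defs

variable (k : Type) [Field k]
variable (L : Type u) [LieRing L] [LieAlgebra k L]

/-- The derived subalgebra `L² = ⁅L, L⁆` as a Lie ideal. -/
def derived : LieIdeal k L := ⁅(⊤ : LieIdeal k L), (⊤ : LieIdeal k L)⁆

/-- A Lie algebra is capable if it is isomorphic to `H / Z(H)` for some Lie algebra `H`. -/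
def IsCapable : Prop :=
  ∃ (H : Type u) (_ : LieRing H) (_ : LieAlgebra k H),
    Nonempty (L ≃ₗ⁅k⁆ H ⧸ LieAlgebra.center k H)

/-- A surjective Lie algebra morphism with central kernel. -/
def IsCentralExtension {E : Type u} [LieRing E] [LieAlgebra k E] (φ : E →ₗ⁅k⁆ L) : Prop :=
  Function.Surjective φ ∧ φ.ker ≤ LieAlgebra.center k E

/-- The epicenter `Z^*(L)`: the intersection of the images `φ(Z(E))` over all central
extensions `φ : E → L`. -/
def epicenter : LieIdeal k L :=
  sInf {I : LieIdeal k L |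
    ∃ (E : Type u) (_ : LieRing E) (_ : LieAlgebra k E) (φ : E →ₗ⁅k⁆ L),
      IsCentralExtension k L φ ∧ (I : Set L) = φ '' (LieAlgebra.center k E)}

/-! ### The nonabelian exterior square -/

/-- The defining relations of the nonabelian exterior square of a Lie algebra. -/
def exteriorRels : Set (FreeLieAlgebra k (L × L)) :=
  {a | (∃ (x x' y : L), a = FreeLieAlgebra.of k (x + x', y) - FreeLieAlgebra.of k (x, y)
          - FreeLieAlgebra.of k (x', y)) ∨
       (∃ (x y y' : L), a = FreeLieAlgebra.of k (x, y + y') - FreeLieAlgebra.of k (x, y)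
          - FreeLieAlgebra.of k (x, y')) ∨
       (∃ (c : k) (x y : L), a = FreeLieAlgebra.of k (c • x, y) - c • FreeLieAlgebra.of k (x, y)) ∨
       (∃ (c : k) (x y : L), a = FreeLieAlgebra.of k (x, c • y) - c • FreeLieAlgebra.of k (x, y)) ∨
       (∃ (x x' y : L), a = FreeLieAlgebra.of k (⁅x, x'⁆, y) - FreeLieAlgebra.of k (x, ⁅x', y⁆)
          + FreeLieAlgebra.of k (x', ⁅x, y⁆)) ∨
       (∃ (x y y' : L), a = FreeLieAlgebra.of k (x, ⁅y, y'⁆) - FreeLieAlgebra.of k (⁅y', x⁆, y)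
          + FreeLieAlgebra.of k (⁅y, x⁆, y')) ∨
       (∃ (x y x' y' : L), a = ⁅FreeLieAlgebra.of k (x, y), FreeLieAlgebra.of k (x', y')⁆
          + FreeLieAlgebra.of k (⁅y, x⁆, ⁅x', y'⁆)) ∨
       (∃ (x : L), a = FreeLieAlgebra.of k (x, x))}

/-- The ideal of relations of the nonabelian exterior square. -/
noncomputable def exteriorIdeal : LieIdeal k (FreeLieAlgebra k (L × L)) :=
  LieSubmodule.lieSpan k _ (exteriorRels k L)

/-- The nonabelian exterior square `L ∧ L`. -/
abbrev ExteriorSquare := FreeLieAlgebra k (L × L) ⧸ exteriorIdeal k L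

variable {L} in
/-- The element `x ∧ y` of the nonabelian exterior square. -/
noncomputable def wedge (x y : L) : ExteriorSquare k L :=
  LieSubmodule.Quotient.mk' (exteriorIdeal k L) (FreeLieAlgebra.of k (x, y))

/-- The exterior center `Z^∧(L) = {x | x ∧ y = 0 for all y}`. -/
def exteriorCenter : Set L := {x | ∀ y : L, wedge k x y = 0}

end Defs

section Defs2

variable (k : Type) [Field k]
variable (L : Type u) [LieRing L] [LieAlgebra k L]

/-- The canonical free presentation `F(L) → L`. -/
noncomputable def pres : FreeLieAlgebra k L →ₗ⁅k⁆ L := FreeLieAlgebra.lift k id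

/-- The Schur multiplier computed from a presentation `ρ : F(L) → L'`,
namely `(ker ρ ∩ F²) / ⁅ker ρ, F⁆`. -/
abbrev multOf {L' : Type v} [LieRing L'] [LieAlgebra k L']
    (ρ : FreeLieAlgebra k L →ₗ⁅k⁆ L') : Type _ :=
  (ρ.ker ⊓ derived k (FreeLieAlgebra k L)).toSubmodule ⧸
    ((⁅ρ.ker, (⊤ : LieIdeal k (FreeLieAlgebra k L))⁆ :
        LieIdeal k (FreeLieAlgebra k L)).toSubmodule.comap
      (ρ.ker ⊓ derived k (FreeLieAlgebra k L)).toSubmodule.subtype)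

/-- The Schur multiplier `M(L) = (R ∩ F²)/⁅R, F⁆` for the canonical free
presentation `0 → R → F(L) → L → 0`. -/
noncomputable abbrev SchurMultiplier : Type _ := multOf k L (pres k L)

/-- The quotient map `L → L ⧸ N` as a morphism of Lie algebras. -/
def lieQuotMk (N : LieIdeal k L) : L →ₗ⁅k⁆ L ⧸ N :=
  { toLinearMap := (N : Submodule k L).mkQ
    map_lie' := rfl }

/-- The canonical presentation `F(L) → L ⧸ N` of a quotient of `L`. -/
noncomputable def presQ (N : LieIdeal k L) : FreeLieAlgebra k L →ₗ⁅k⁆ L ⧸ N :=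
  (lieQuotMk k L N).comp (pres k L)

end Defs2

section maps

variable (k : Type) [Field k]
variable (L : Type u) [LieRing L] [LieAlgebra k L]

lemma ker_le_kerQ (N : LieIdeal k L) : (pres k L).ker ≤ (presQ k L N).ker := by
  intro x hx
  rw [LieHom.mem_ker] at hx ⊢
  simp [presQ, LieHom.comp_apply, hx, lieQuotMk]

/-- The natural map `M(L) → M(L/N)` on Schur multipliers induced by a
(central) ideal `N` of `L`. -/
noncomputable def multMap (N : LieIdeal k L) :
    SchurMultiplier k L →ₗ[k] multOf k L (presQ k L N) :=
  Submodule.mapQ _ _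
    (Submodule.inclusion (by
      exact_mod_cast inf_le_inf_right (derived k (FreeLieAlgebra k L)) (ker_le_kerQ k L N)))
    (by
      intro x hx
      simp only [Submodule.mem_comap] at hx ⊢
      have hmono : (⁅(pres k L).ker, (⊤ : LieIdeal k (FreeLieAlgebra k L))⁆ :
          LieIdeal k (FreeLieAlgebra k L)) ≤
          ⁅(presQ k L N).ker, (⊤ : LieIdeal k (FreeLieAlgebra k L))⁆ :=
        LieSubmodule.mono_lie_left _ (ker_le_kerQ k L N)
      exact hmono hx)

end maps

section lift

variable {k : Type} [Field k]
variable {L : Type u} [LieRing L] [LieAlgebra k L]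
variable {L' : Type v} [LieRing L'] [LieAlgebra k L']

/-- Universal property of quotients of Lie algebras. -/
def lieQuotLift (I : LieIdeal k L) (f : L →ₗ⁅k⁆ L') (h : I ≤ f.ker) : (L ⧸ I) →ₗ⁅k⁆ L' :=
  { toLinearMap := (I : Submodule k L).liftQ f.toLinearMap (fun x hx => by
      have := h hx; rwa [LieHom.mem_ker] at this)
    map_lie' := by
      rintro ⟨x⟩ ⟨y⟩
      exact f.map_lie x y }

@[simp] lemma lieQuotLift_mk (I : LieIdeal k L) (f : L →ₗ⁅k⁆ L') (h : I ≤ f.ker) (x : L) :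
    lieQuotLift I f h (lieQuotMk k L I x) = f x := rfl

end lift

section extmaps

variable (k : Type) [Field k]
variable (L : Type u) [LieRing L] [LieAlgebra k L]

/-- `x ∧ y` rewritten via the quotient morphism. -/
lemma wedge_def (x y : L) :
    wedge k x y = lieQuotMk k _ (exteriorIdeal k L) (FreeLieAlgebra.of k (x, y)) := rfl

/-- The lift to the free Lie algebra of the map `(x, y) ↦ x ∧ y` valued in the
exterior square of a quotient of `L`. -/
noncomputable def extAux (N : LieIdeal k L) :
    FreeLieAlgebra k (L × L) →ₗ⁅k⁆ ExteriorSquare k (L ⧸ N) :=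
  FreeLieAlgebra.lift k fun p => wedge k (lieQuotMk k L N p.1) (lieQuotMk k L N p.2)

lemma wedge_mem_rel_zero {M : Type v} [LieRing M] [LieAlgebra k M]
    {a : FreeLieAlgebra k (M × M)} (ha : a ∈ exteriorRels k M) :
    lieQuotMk k _ (exteriorIdeal k M) a = 0 := by
  have h : a ∈ exteriorIdeal k M := LieSubmodule.subset_lieSpan ha
  show (exteriorIdeal k M : Submodule k (FreeLieAlgebra k (M × M))).mkQ a = 0
  rw [Submodule.mkQ_apply, Submodule.Quotient.mk_eq_zero]
  exact h

lemma extAux_rels (N : LieIdeal k L) : exteriorIdeal k L ≤ (extAux k L N).ker := by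
  rw [exteriorIdeal, LieSubmodule.lieSpan_le]
  intro a ha
  rw [SetLike.mem_coe, LieHom.mem_ker]
  set q := lieQuotMk k L N with hq
  have key : ∀ x y : L, extAux k L N (FreeLieAlgebra.of k (x, y)) =
      lieQuotMk k _ (exteriorIdeal k (L ⧸ N)) (FreeLieAlgebra.of k (q x, q y)) := by
    intro x y; rw [extAux, FreeLieAlgebra.lift_of_apply]; rfl
  obtain h|h|h|h|h|h|h|h := ha
  · obtain ⟨x, x', y, rfl⟩ := h
    simp only [map_sub, key]
    rw [← map_sub, ← map_sub]
    apply wedge_mem_rel_zero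
    exact Or.inl ⟨q x, q x', q y, by rw [map_add]⟩
  · obtain ⟨x, y, y', rfl⟩ := h
    simp only [map_sub, key]
    rw [← map_sub, ← map_sub]
    apply wedge_mem_rel_zero
    exact Or.inr (Or.inl ⟨q x, q y, q y', by rw [map_add]⟩)
  · obtain ⟨c, x, y, rfl⟩ := h
    simp only [map_sub, map_smul, key]
    rw [← map_smul (lieQuotMk k _ (exteriorIdeal k (L ⧸ N))) c
      (FreeLieAlgebra.of k (q x, q y)), ← map_sub]
    apply wedge_mem_rel_zero
    exact Or.inr (Or.inr (Or.inl ⟨c, q x, q y, rfl⟩))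
  · obtain ⟨c, x, y, rfl⟩ := h
    simp only [map_sub, map_smul, key]
    rw [← map_smul (lieQuotMk k _ (exteriorIdeal k (L ⧸ N))) c
      (FreeLieAlgebra.of k (q x, q y)), ← map_sub]
    apply wedge_mem_rel_zero
    exact Or.inr (Or.inr (Or.inr (Or.inl ⟨c, q x, q y, rfl⟩)))
  · obtain ⟨x, x', y, rfl⟩ := h
    simp only [map_sub, map_add, key]
    rw [← map_sub, ← map_add]
    apply wedge_mem_rel_zero
    refine Or.inr (Or.inr (Or.inr (Or.inr (Or.inl ⟨q x, q x', q y, ?_⟩))))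
    simp [LieHom.map_lie]
  · obtain ⟨x, y, y', rfl⟩ := h
    simp only [map_sub, map_add, key]
    rw [← map_sub, ← map_add]
    apply wedge_mem_rel_zero
    refine Or.inr (Or.inr (Or.inr (Or.inr (Or.inr (Or.inl ⟨q x, q y, q y', ?_⟩)))))
    simp [LieHom.map_lie]
  · obtain ⟨x, y, x', y', rfl⟩ := h
    simp only [map_add, LieHom.map_lie, key]
    rw [← LieHom.map_lie, ← map_add]
    apply wedge_mem_rel_zero
    refine Or.inr (Or.inr (Or.inr (Or.inr (Or.inr (Or.inr (Or.inl
      ⟨q x, q y, q x', q y', ?_⟩))))))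
    simp [LieHom.map_lie]
  · obtain ⟨x, rfl⟩ := h
    rw [key]
    apply wedge_mem_rel_zero
    exact Or.inr (Or.inr (Or.inr (Or.inr (Or.inr (Or.inr (Or.inr ⟨q x, rfl⟩))))))

/-- The natural morphism `L ∧ L → (L/N) ∧ (L/N)` of exterior squares. -/
noncomputable def extSqMap (N : LieIdeal k L) :
    ExteriorSquare k L →ₗ⁅k⁆ ExteriorSquare k (L ⧸ N) :=
  lieQuotLift (exteriorIdeal k L) (extAux k L N) (extAux_rels k L N)

/-- The commutator morphism `L ∧ L → L`, `x ∧ y ↦ ⁅x, y⁆`. -/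
noncomputable def commutatorMap : ExteriorSquare k L →ₗ⁅k⁆ L :=
  lieQuotLift (exteriorIdeal k L) (FreeLieAlgebra.lift k fun p : L × L => ⁅p.1, p.2⁆)
    (by
      rw [exteriorIdeal, LieSubmodule.lieSpan_le]
      intro a ha
      rw [SetLike.mem_coe, LieHom.mem_ker]
      obtain h|h|h|h|h|h|h|h := ha
      · obtain ⟨x, x', y, rfl⟩ := h
        simp [FreeLieAlgebra.lift_of_apply, add_lie]
      · obtain ⟨x, y, y', rfl⟩ := h
        simp [FreeLieAlgebra.lift_of_apply, lie_add]
      · obtain ⟨c, x, y, rfl⟩ := h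
        simp [FreeLieAlgebra.lift_of_apply, smul_lie]
      · obtain ⟨c, x, y, rfl⟩ := h
        simp [FreeLieAlgebra.lift_of_apply, lie_smul]
      · obtain ⟨x, x', y, rfl⟩ := h
        simp only [map_sub, map_add, FreeLieAlgebra.lift_of_apply, lie_lie]
        abel
      · obtain ⟨x, y, y', rfl⟩ := h
        simp only [map_sub, map_add, FreeLieAlgebra.lift_of_apply, lie_lie]
        rw [leibniz_lie x y' y, ← lie_skew y ⁅x, y'⁆]
        abel
      · obtain ⟨x, y, x', y', rfl⟩ := h
        simp only [map_add, LieHom.map_lie, FreeLieAlgebra.lift_of_apply]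
        rw [← lie_skew y x]
        simp
      · obtain ⟨x, rfl⟩ := h
        simp [FreeLieAlgebra.lift_of_apply])

end extmaps

section more

variable (k : Type) [Field k]
variable (L : Type u) [LieRing L] [LieAlgebra k L]

/-- A Lie algebra is a Heisenberg algebra `H(m)` (of dimension `2m + 1`) iff its derived
subalgebra coincides with its centre and is one-dimensional, and it has dimension `2m + 1`. -/
def IsHeisenberg (m : ℕ) : Prop :=
  derived k L = LieAlgebra.center k L ∧ Module.finrank k L = 2 * m + 1 ∧
    Module.finrank k (derived k L) = 1

/-- A vector space regarded as an abelian Lie algebra. -/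
def AbelianLieOf (V : Type v) : Type v := V

instance (V : Type v) [AddCommGroup V] : AddCommGroup (AbelianLieOf V) :=
  inferInstanceAs (AddCommGroup V)

instance (V : Type v) [AddCommGroup V] [Module k V] : Module k (AbelianLieOf V) :=
  inferInstanceAs (Module k V)

instance (V : Type v) [AddCommGroup V] : LieRing (AbelianLieOf V) where
  bracket _ _ := 0
  add_lie _ _ _ := by simp
  lie_add _ _ _ := by simp
  lie_self _ := rfl
  leibniz_lie _ _ _ := by simp

instance (V : Type v) [AddCommGroup V] [Module k V] : LieAlgebra k (AbelianLieOf V) where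
  lie_smul _ _ _ := by
    show (0 : AbelianLieOf V) = _ • (0 : AbelianLieOf V)
    simp

/-- A decomposition of `L` as the direct sum of a Heisenberg algebra `H(m)` and an
abelian Lie algebra of dimension `j`. -/
structure HeisenbergAbelianDecomp (m j : ℕ) where
  H : Type u
  A : Type u
  [instHL : LieRing H]
  [instHA : LieAlgebra k H]
  [instAL : LieRing A]
  [instAA : LieAlgebra k A]
  heis : IsHeisenberg k H m
  abel : IsLieAbelian A
  dimA : Module.finrank k A = j
  equiv : Nonempty (L ≃ₗ⁅k⁆ H × A)

/-- The projection `H × A → H` as a Lie algebra morphism. -/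
def lieFst (H A : Type u) [LieRing H] [LieAlgebra k H] [LieRing A] [LieAlgebra k A] :
    H × A →ₗ⁅k⁆ H :=
  { toLinearMap := LinearMap.fst k H A
    map_lie' := rfl }

end more

set_option linter.unusedSectionVars false

section H5
variable (k : Type) [Field k]

def br5 (a b : Fin 5 → k) : Fin 5 → k :=
  ![0, 0, a 0 * b 1 - a 1 * b 0, a 0 * b 2 - a 2 * b 0, a 1 * b 2 - a 2 * b 1]

variable {k}

lemma br5_add_left (a b c : Fin 5 → k) : br5 k (a + b) c = br5 k a c + br5 k b c := by
  funext i; fin_cases i <;> simp [br5] <;> ring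

lemma br5_add_right (a b c : Fin 5 → k) : br5 k a (b + c) = br5 k a b + br5 k a c := by
  funext i; fin_cases i <;> simp [br5] <;> ring

lemma br5_self (a : Fin 5 → k) : br5 k a a = 0 := by
  funext i; fin_cases i <;> simp [br5] <;> ring

lemma br5_leibniz (a b c : Fin 5 → k) :
    br5 k a (br5 k b c) = br5 k (br5 k a b) c + br5 k b (br5 k a c) := by
  funext i; fin_cases i <;> simp [br5] <;> ring

lemma br5_smul (t : k) (a b : Fin 5 → k) : br5 k a (t • b) = t • br5 k a b := by
  funext i; fin_cases i <;> simp [br5] <;> ring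

variable (k)

def H5 : Type u := ULift.{u} (Fin 5 → k)

instance : AddCommGroup (H5.{u} k) := inferInstanceAs (AddCommGroup (ULift (Fin 5 → k)))
instance : Module k (H5.{u} k) := inferInstanceAs (Module k (ULift (Fin 5 → k)))

variable {k}

def H5.mk (a : Fin 5 → k) : H5.{u} k := ULift.up a
def H5.c (x : H5.{u} k) : Fin 5 → k := x.down

@[simp] lemma H5.c_mk (a : Fin 5 → k) : (H5.mk.{u} a).c = a := rfl
@[simp] lemma H5.c_add (x y : H5.{u} k) : (x + y).c = x.c + y.c := rfl
@[simp] lemma H5.c_smul (t : k) (x : H5.{u} k) : (t • x).c = t • x.c := rfl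
@[simp] lemma H5.c_zero : (0 : H5.{u} k).c = 0 := rfl

@[ext] lemma H5.ext {x y : H5.{u} k} (h : x.c = y.c) : x = y := ULift.ext x y h

instance : LieRing (H5.{u} k) where
  bracket x y := H5.mk (br5 k x.c y.c)
  add_lie x y z := by
    show H5.mk (br5 k (x + y).c z.c) = H5.mk (br5 k x.c z.c) + H5.mk (br5 k y.c z.c)
    ext; simp [br5_add_left]
  lie_add x y z := by
    show H5.mk (br5 k x.c (y + z).c) = H5.mk (br5 k x.c y.c) + H5.mk (br5 k x.c z.c)
    ext; simp [br5_add_right]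
  lie_self x := by
    show H5.mk (br5 k x.c x.c) = 0
    ext; simp [br5_self]
  leibniz_lie x y z := by
    show H5.mk (br5 k x.c (H5.mk (br5 k y.c z.c)).c)
      = H5.mk (br5 k (H5.mk (br5 k x.c y.c)).c z.c) + H5.mk (br5 k y.c (H5.mk (br5 k x.c z.c)).c)
    apply H5.ext; simp only [H5.c_mk, H5.c_add]; exact br5_leibniz _ _ _

instance : LieAlgebra k (H5.{u} k) where
  lie_smul t x y := by
    show H5.mk (br5 k x.c (t • y).c) = t • H5.mk (br5 k x.c y.c)
    ext; simp [br5_smul]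

lemma H5.bracket_c (x y : H5.{u} k) : ⁅x, y⁆.c = br5 k x.c y.c := rfl

lemma H5.mem_center_iff {x : H5.{u} k} :
    x ∈ LieAlgebra.center k (H5.{u} k) ↔ x.c 0 = 0 ∧ x.c 1 = 0 ∧ x.c 2 = 0 := by
  constructor
  · intro h
    have h0 := congrArg (fun v : H5.{u} k => v.c 2) (h (H5.mk ![0, 1, 0, 0, 0]))
    have h1 := congrArg (fun v : H5.{u} k => v.c 2) (h (H5.mk ![1, 0, 0, 0, 0]))
    have h2 := congrArg (fun v : H5.{u} k => v.c 3) (h (H5.mk ![1, 0, 0, 0, 0]))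
    simp [H5.bracket_c, br5] at h0 h1 h2
    exact ⟨h0, by simpa using h1, by simpa using h2⟩
  · rintro ⟨h0, h1, h2⟩ y
    apply H5.ext; rw [H5.bracket_c]; funext i
    fin_cases i <;> simp [br5, h0, h1, h2]
end H5
section Struct

variable {k : Type} [Field k]
variable {L : Type u} [LieRing L] [LieAlgebra k L] [Module.Finite k L]
variable {m : ℕ}

/-- Structural data of a Heisenberg algebra: a generator of the centre. -/
lemma heis_exists_z (hL : IsHeisenberg k L m) :
    ∃ z : L, z ≠ 0 ∧ (∀ x : L, ⁅x, z⁆ = 0) ∧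
      (∀ u v : L, ∃ c : k, ⁅u, v⁆ = c • z) ∧
      (∀ u : L, u ∈ LieAlgebra.center k L → ∃ c : k, u = c • z) := by
  obtain ⟨z0, hz0, hall⟩ := finrank_eq_one_iff'.mp hL.2.2
  refine ⟨(z0 : L), ?_, ?_, ?_, ?_⟩
  · simpa using Subtype.coe_injective.ne hz0
  · intro x
    have hzc : (z0 : L) ∈ LieAlgebra.center k L := hL.1 ▸ z0.2
    exact (LieModule.mem_maxTrivSubmodule k L L _).mp hzc x
  · intro u v
    have h : ⁅u, v⁆ ∈ derived k L :=
      LieSubmodule.lie_mem_lie (LieSubmodule.mem_top u) (LieSubmodule.mem_top v)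
    obtain ⟨c, hc⟩ := hall ⟨⁅u, v⁆, h⟩
    exact ⟨c, by simpa using congrArg (Subtype.val) hc.symm⟩
  · intro u hu
    have h : u ∈ derived k L := hL.1 ▸ hu
    obtain ⟨c, hc⟩ := hall ⟨u, h⟩
    exact ⟨c, by simpa using congrArg (Subtype.val) hc.symm⟩

/-- There is a non-central element. -/
lemma heis_exists_noncentral (hm : 1 ≤ m) (hL : IsHeisenberg k L m) :
    ∃ x : L, x ∉ LieAlgebra.center k L := by
  by_contra h
  push_neg at h
  have htop : LieAlgebra.center k L = ⊤ := by
    rw [eq_top_iff]; intro x _; exact h x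
  have h1 : Module.finrank k (LieAlgebra.center k L) = 1 := hL.1 ▸ hL.2.2
  rw [htop] at h1
  have h1' : Module.finrank k (⊤ : Submodule k L) = 1 := h1
  rw [finrank_top, hL.2.1] at h1'
  omega


/-- Given a non-central `x`, find `y` with `⁅x, y⁆ = z`. -/
lemma heis_exists_partner {z : L} (hz : z ≠ 0)
    (hbr : ∀ u v : L, ∃ c : k, ⁅u, v⁆ = c • z)
    {x : L} (hx : x ∉ LieAlgebra.center k L) :
    ∃ y : L, ⁅x, y⁆ = z := by
  rw [LieModule.mem_maxTrivSubmodule] at hx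
  push_neg at hx
  obtain ⟨w, hw⟩ := hx
  have hxw : ⁅x, w⁆ ≠ 0 := by rw [← lie_skew, neg_ne_zero]; exact hw
  obtain ⟨c, hc⟩ := hbr x w
  have hcne : c ≠ 0 := by rintro rfl; rw [zero_smul] at hc; exact hxw hc
  refine ⟨c⁻¹ • w, ?_⟩
  rw [lie_smul, hc, smul_smul, inv_mul_cancel₀ hcne, one_smul]

end Struct
section Quad

variable {k : Type} [Field k]
variable {L : Type u} [LieRing L] [LieAlgebra k L] [Module.Finite k L]
variable {m : ℕ}

lemma heis_decomp {z x1 y1 : L}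
    (hbr : ∀ u v : L, ∃ c : k, ⁅u, v⁆ = c • z)
    (hzc : ∀ x : L, ⁅x, z⁆ = 0)
    (hxy : ⁅x1, y1⁆ = z) (v : L) :
    ∃ (a b : k) (w : L), ⁅x1, w⁆ = 0 ∧ ⁅y1, w⁆ = 0 ∧ v = a • x1 + b • y1 + w := by
  obtain ⟨c, hc⟩ := hbr x1 v
  obtain ⟨d, hd⟩ := hbr y1 v
  have hyx : ⁅y1, x1⁆ = -z := by rw [← lie_skew, hxy]
  refine ⟨-d, c, v + d • x1 - c • y1, ?_, ?_, by module⟩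
  · rw [lie_sub, lie_add, hc, lie_smul, lie_self, lie_smul, hxy, smul_zero, add_zero, sub_self]
  · rw [lie_sub, lie_add, hd, lie_smul, hyx, lie_smul, lie_self, smul_zero, sub_zero,
      smul_neg, add_neg_cancel]

lemma heis_quadruple (hm : 2 ≤ m) (hL : IsHeisenberg k L m) {z : L} (hz : z ≠ 0)
    (hzc : ∀ x : L, ⁅x, z⁆ = 0)
    (hbr : ∀ u v : L, ∃ c : k, ⁅u, v⁆ = c • z)
    (hcen : ∀ u : L, u ∈ LieAlgebra.center k L → ∃ c : k, u = c • z) :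
    ∃ x1 y1 x2 y2 : L, ⁅x1, y1⁆ = z ∧ ⁅x2, y2⁆ = z ∧ ⁅x1, x2⁆ = 0 ∧ ⁅x1, y2⁆ = 0 ∧
      ⁅y1, x2⁆ = 0 ∧ ⁅y1, y2⁆ = 0 := by
  obtain ⟨x1, hx1⟩ := heis_exists_noncentral (le_trans one_le_two hm) hL
  obtain ⟨y1, hxy⟩ := heis_exists_partner hz hbr hx1
  by_cases hcomm : ∀ w w' : L, (⁅x1, w⁆ = 0 ∧ ⁅y1, w⁆ = 0) →
      (⁅x1, w'⁆ = 0 ∧ ⁅y1, w'⁆ = 0) → ⁅w, w'⁆ = 0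
  · exfalso
    have hsp : (⊤ : Submodule k L) ≤ Submodule.span k ({x1, y1, z} : Set L) := by
      intro v _
      obtain ⟨a, b, w, hw1, hw2, rfl⟩ := heis_decomp hbr hzc hxy v
      have hwc : w ∈ LieAlgebra.center k L := by
        rw [LieModule.mem_maxTrivSubmodule]
        intro u
        obtain ⟨a', b', w', hw1', hw2', rfl⟩ := heis_decomp hbr hzc hxy u
        rw [add_lie, add_lie, smul_lie, smul_lie, hw1, hw2, smul_zero, smul_zero,
          hcomm w' w ⟨hw1', hw2'⟩ ⟨hw1, hw2⟩, add_zero, add_zero]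
      obtain ⟨e, rfl⟩ := hcen w hwc
      refine Submodule.add_mem _ (Submodule.add_mem _ ?_ ?_) ?_ <;>
        exact Submodule.smul_mem _ _ (Submodule.subset_span (by simp))
    have h3 : Module.finrank k L ≤ 3 := by
      classical
      have := finrank_span_le_card (R := k) ({x1, y1, z} : Set L)
      have hcard : ({x1, y1, z} : Set L).toFinset.card ≤ 3 := by
        simp only [Set.toFinset_insert, Set.toFinset_singleton]
        exact le_trans (Finset.card_insert_le _ _)
          (by have := Finset.card_insert_le y1 ({z} : Finset L); simp only [Finset.card_singleton] at this; omega)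
      calc Module.finrank k L = Module.finrank k (⊤ : Submodule k L) := (finrank_top k L).symm
        _ ≤ Module.finrank k (Submodule.span k ({x1, y1, z} : Set L)) :=
            Submodule.finrank_mono hsp
        _ ≤ 3 := le_trans this hcard
    rw [hL.2.1] at h3
    omega
  · push_neg at hcomm
    obtain ⟨w, w', ⟨hw1, hw2⟩, ⟨hw1', hw2'⟩, hne⟩ := hcomm
    obtain ⟨e, he⟩ := hbr w w'
    have hene : e ≠ 0 := by rintro rfl; rw [zero_smul] at he; exact hne he
    refine ⟨x1, y1, w, e⁻¹ • w', hxy, ?_, hw1, ?_, hw2, ?_⟩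
    · rw [lie_smul, he, smul_smul, inv_mul_cancel₀ hene, one_smul]
    · rw [lie_smul, hw1', smul_zero]
    · rw [lie_smul, hw2', smul_zero]

end Quad
section Fwd

variable (k : Type) [Field k]
variable (L : Type u) [LieRing L] [LieAlgebra k L]

variable {k L} {m : ℕ} [Module.Finite k L]

lemma heis_not_capable (hm : 2 ≤ m) (hL : IsHeisenberg k L m) : ¬ IsCapable k L := by
  rintro ⟨H, _, _, ⟨e⟩⟩
  obtain ⟨z, hz, hzc, hbr, hcen⟩ := heis_exists_z hL
  obtain ⟨x1, y1, x2, y2, h11, h22, h12, h12', h21, h21'⟩ :=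
    heis_quadruple hm hL hz hzc hbr hcen
  set φ : H →ₗ⁅k⁆ L := e.symm.toLieHom.comp (lieQuotMk k H (LieAlgebra.center k H)) with hφ
  have hφsurj : Function.Surjective φ := by
    apply Function.Surjective.comp e.symm.surjective
    exact Submodule.mkQ_surjective _
  have hker : ∀ u : H, φ u = 0 ↔ u ∈ LieAlgebra.center k H := by
    intro u
    rw [hφ, LieHom.comp_apply]
    constructor
    · intro h
      have : lieQuotMk k H (LieAlgebra.center k H) u = 0 := by
        apply e.symm.injective
        rw [h, map_zero]
      rwa [show lieQuotMk k H (LieAlgebra.center k H) u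
          = Submodule.Quotient.mk u from rfl, Submodule.Quotient.mk_eq_zero] at this
    · intro h
      rw [show lieQuotMk k H (LieAlgebra.center k H) u
          = Submodule.Quotient.mk u from rfl]
      rw [(Submodule.Quotient.mk_eq_zero _).mpr h, map_zero]
  have hcen1 : ∀ u : H, φ u = 0 → ∀ v : H, ⁅v, u⁆ = 0 := by
    intro u hu v
    exact (LieModule.mem_maxTrivSubmodule k H H u).mp ((hker u).mp hu) v
  have hcen2 : ∀ u : H, φ u = 0 → ∀ v : H, ⁅u, v⁆ = 0 := by
    intro u hu v
    rw [← lie_skew, hcen1 u hu v, neg_zero]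
  obtain ⟨X1, hX1⟩ := hφsurj x1
  obtain ⟨Y1, hY1⟩ := hφsurj y1
  obtain ⟨X2, hX2⟩ := hφsurj x2
  obtain ⟨Y2, hY2⟩ := hφsurj y2
  set C : H := ⁅X2, Y2⁆ with hC
  have hφC : φ C = z := by rw [hC, LieHom.map_lie, hX2, hY2, h22]
  have hbrφ : ∀ (A B : H) (a b : L), φ A = a → φ B = b → ⁅a, b⁆ = 0 → ∀ v : H, ⁅v, ⁅A, B⁆⁆ = 0 ∧ ⁅⁅A, B⁆, v⁆ = 0 := by
    intro A B a b ha hb hab v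
    have : φ ⁅A, B⁆ = 0 := by rw [LieHom.map_lie, ha, hb, hab]
    exact ⟨hcen1 _ this v, hcen2 _ this v⟩
  have hX1C : ⁅X1, C⁆ = 0 := by
    rw [hC, leibniz_lie]
    rw [(hbrφ X1 X2 x1 x2 hX1 hX2 h12 Y2).2, (hbrφ X1 Y2 x1 y2 hX1 hY2 h12' X2).1, add_zero]
  have hY1C : ⁅Y1, C⁆ = 0 := by
    rw [hC, leibniz_lie]
    rw [(hbrφ Y1 X2 y1 x2 hY1 hX2 h21 Y2).2, (hbrφ Y1 Y2 y1 y2 hY1 hY2 h21' X2).1, add_zero]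
  have hvan : ∀ (A B : H) (a b : L), φ A = a → φ B = b → ⁅A, C⁆ = 0 →
      ∀ h : H, ⁅A, ⁅B, h⁆⁆ = 0 := by
    intro A B a b hA hB hAC h
    obtain ⟨β, hβ⟩ := hbr b (φ h)
    have hκ : φ (⁅B, h⁆ - β • C) = 0 := by
      rw [map_sub, map_smul, LieHom.map_lie, hB, hφC, hβ, sub_self]
    have : ⁅B, h⁆ = (⁅B, h⁆ - β • C) + β • C := by abel
    rw [this, lie_add, lie_smul, hcen1 _ hκ A, hAC, smul_zero, add_zero]
  have hfinal : ⁅X1, Y1⁆ ∈ LieAlgebra.center k H := by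
    rw [LieModule.mem_maxTrivSubmodule]
    intro v
    rw [← lie_skew, lie_lie, hvan X1 Y1 x1 y1 hX1 hY1 hX1C v,
      hvan Y1 X1 y1 x1 hY1 hX1 hY1C v, sub_zero, neg_zero]
  have : φ ⁅X1, Y1⁆ = 0 := (hker _).mpr hfinal
  rw [LieHom.map_lie, hX1, hY1, h11] at this
  exact hz this

end Fwd
section Bwd

variable {k : Type} [Field k]
variable {L : Type u} [LieRing L] [LieAlgebra k L]
variable {L' : Type v} [LieRing L'] [LieAlgebra k L']

/-- The Lie algebra morphism `H5 → L` sending the first three coordinates to `x, y, z`. -/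
def heisHom (x y z : L) (hxy : ⁅x, y⁆ = z) (hyx : ⁅y, x⁆ = -z)
    (hzw : ∀ w : L, ⁅z, w⁆ = 0) (hwz : ∀ w : L, ⁅w, z⁆ = 0) :
    H5.{u} k →ₗ⁅k⁆ L where
  toFun a := a.c 0 • x + a.c 1 • y + a.c 2 • z
  map_add' a b := by
    show ((a + b).c 0) • x + _ + _ = _
    simp only [H5.c_add, Pi.add_apply, add_smul]
    abel
  map_smul' t a := by
    show ((t • a).c 0) • x + _ + _ = _
    simp only [H5.c_smul, Pi.smul_apply, smul_eq_mul, mul_smul, RingHom.id_apply, smul_add]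
  map_lie' {a b} := by
    show (⁅a, b⁆.c 0) • x + (⁅a, b⁆.c 1) • y + (⁅a, b⁆.c 2) • z = _
    rw [H5.bracket_c]
    simp only [br5, Matrix.cons_val_zero, Matrix.cons_val_one, Matrix.head_cons,
      Matrix.cons_val_two, Matrix.tail_cons]
    simp only [lie_add, add_lie, lie_smul, smul_lie, lie_self, hxy, hyx, hzw, hwz,
      smul_zero, zero_add, add_zero, zero_smul, smul_neg, smul_smul]
    module

lemma heis_capable [Module.Finite k L] (hL : IsHeisenberg k L 1) : IsCapable k L := by
  obtain ⟨z, hz, hzc, hbr, hcen⟩ := heis_exists_z hL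
  obtain ⟨x, hx⟩ := heis_exists_noncentral le_rfl hL
  obtain ⟨y, hxy⟩ := heis_exists_partner hz hbr hx
  have hyx : ⁅y, x⁆ = -z := by rw [← lie_skew, hxy]
  have hzw : ∀ w : L, ⁅z, w⁆ = 0 := fun w => by rw [← lie_skew, hzc w, neg_zero]
  have hind : ∀ a b c : k, a • x + b • y + c • z = 0 → a = 0 ∧ b = 0 ∧ c = 0 := by
    intro a b c h
    have ha : a = 0 := by
      have := congrArg (fun v => ⁅v, y⁆) h
      simp only [add_lie, smul_lie, hxy, lie_self, hzw, smul_zero, add_zero, zero_lie] at this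
      rcases smul_eq_zero.mp this with h' | h'
      exacts [h', absurd h' hz]
    subst ha
    have hb : b = 0 := by
      have := congrArg (fun v => ⁅v, x⁆) h
      simp only [zero_smul, zero_add, add_lie, smul_lie, hyx, lie_self, hzw, smul_zero,
        add_zero, smul_neg, neg_eq_zero, zero_lie] at this
      rcases smul_eq_zero.mp this with h' | h'
      exacts [h', absurd h' hz]
    subst hb
    simp only [zero_smul, zero_add] at h
    rcases smul_eq_zero.mp h with h' | h'
    exacts [⟨rfl, rfl, h'⟩, absurd h' hz]
  have hli : LinearIndependent k ![x, y, z] := by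
    rw [Fintype.linearIndependent_iff]
    intro g hg
    rw [Fin.sum_univ_three] at hg
    simp only [Matrix.cons_val_zero, Matrix.cons_val_one, Matrix.head_cons,
      Matrix.cons_val_two, Matrix.tail_cons] at hg
    obtain ⟨h0, h1, h2⟩ := hind _ _ _ hg
    intro i; fin_cases i <;> assumption
  have hspan : Submodule.span k (Set.range ![x, y, z]) = ⊤ := by
    apply Submodule.eq_top_of_finrank_eq
    rw [finrank_span_eq_card hli, hL.2.1]
    simp
  set ψ : H5.{u} k →ₗ⁅k⁆ L := heisHom x y z hxy hyx hzw hzc with hψdef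
  have hψ : ∀ a : H5.{u} k, ψ a = a.c 0 • x + a.c 1 • y + a.c 2 • z := fun a => rfl
  have hψsurj : Function.Surjective ψ := by
    intro v
    have hv : v ∈ Submodule.span k (Set.range ![x, y, z]) := hspan ▸ Submodule.mem_top
    rw [Submodule.mem_span_range_iff_exists_fun k] at hv
    obtain ⟨c, hc⟩ := hv
    refine ⟨H5.mk ![c 0, c 1, c 2, 0, 0], ?_⟩
    rw [hψ]
    rw [Fin.sum_univ_three] at hc
    simpa using hc
  have hkerψ : ∀ a : H5.{u} k, ψ a = 0 ↔ a ∈ LieAlgebra.center k (H5.{u} k) := by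
    intro a
    rw [hψ, H5.mem_center_iff]
    constructor
    · exact fun h => hind _ _ _ h
    · rintro ⟨h0, h1, h2⟩; rw [h0, h1, h2]; simp
  set χ : (H5.{u} k ⧸ LieAlgebra.center k (H5.{u} k)) →ₗ⁅k⁆ L :=
    lieQuotLift (LieAlgebra.center k (H5.{u} k)) ψ
      (fun u hu => LieHom.mem_ker.mpr ((hkerψ u).mpr hu)) with hχdef
  have hχmk : ∀ a : H5.{u} k, χ (Submodule.Quotient.mk a) = ψ a := fun a => rfl
  have hχsurj : Function.Surjective χ := by
    intro v
    obtain ⟨a, ha⟩ := hψsurj v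
    exact ⟨Submodule.Quotient.mk a, by rw [hχmk, ha]⟩
  have hχinj : Function.Injective χ := by
    intro q q' h
    obtain ⟨a, rfl⟩ := Submodule.Quotient.mk_surjective _ q
    obtain ⟨a', rfl⟩ := Submodule.Quotient.mk_surjective _ q'
    rw [hχmk, hχmk] at h
    have : ψ (a - a') = 0 := by rw [map_sub, h, sub_self]
    have hmem := (hkerψ _).mp this
    rw [← sub_eq_zero, ← Submodule.Quotient.mk_sub, Submodule.Quotient.mk_eq_zero]
    exact hmem
  exact ⟨H5.{u} k, inferInstance, inferInstance,
    ⟨(LieEquiv.ofBijective χ ⟨hχinj, hχsurj⟩).symm⟩⟩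

end Bwd

/-- the Heisenberg algebra `H(m)` is capable iff `m = 1`. -/
theorem heisenberg_capable_iff (k : Type) [Field k] (L : Type u) [LieRing L]
    [LieAlgebra k L] [Module.Finite k L] (m : ℕ) (hm : 1 ≤ m) (hL : IsHeisenberg k L m) :
    IsCapable k L ↔ m = 1 := by
  constructor
  · intro hcap
    by_contra hne
    exact heis_not_capable (by omega) hL hcap
  · rintro rfl
    exact heis_capable hL
end

section
/- For m ≥ 2, the derived subalgebra H(m)² (the one-dimensional center spanned by z) is contained in the exterior center Z^∧(H(m)). -/
open Module Function

universe u v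

section MyAux

variable {k : Type} [Field k] {L : Type u} [LieRing L] [LieAlgebra k L]

lemma my_wedge_smul_left (c : k) (x y : L) : wedge k (c • x) y = c • wedge k x y := by
  have h := wedge_mem_rel_zero k (M := L)
    (a := FreeLieAlgebra.of k (c • x, y) - c • FreeLieAlgebra.of k (x, y))
    (Or.inr (Or.inr (Or.inl ⟨c, x, y, rfl⟩)))
  rw [map_sub, map_smul] at h
  rw [wedge_def, wedge_def]
  exact sub_eq_zero.mp h

lemma my_wedge_smul_right (c : k) (x y : L) : wedge k x (c • y) = c • wedge k x y := by
  have h := wedge_mem_rel_zero k (M := L)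
    (a := FreeLieAlgebra.of k (x, c • y) - c • FreeLieAlgebra.of k (x, y))
    (Or.inr (Or.inr (Or.inr (Or.inl ⟨c, x, y, rfl⟩))))
  rw [map_sub, map_smul] at h
  rw [wedge_def, wedge_def]
  exact sub_eq_zero.mp h

lemma my_wedge_zero_right (x : L) : wedge k x 0 = 0 := by
  have h := my_wedge_smul_right (0 : k) x (0 : L)
  rwa [smul_zero, zero_smul] at h

lemma my_wedge_lie_left (x x' y : L) :
    wedge k ⁅x, x'⁆ y = wedge k x ⁅x', y⁆ - wedge k x' ⁅x, y⁆ := by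
  have h := wedge_mem_rel_zero k (M := L)
    (a := FreeLieAlgebra.of k (⁅x, x'⁆, y) - FreeLieAlgebra.of k (x, ⁅x', y⁆)
      + FreeLieAlgebra.of k (x', ⁅x, y⁆))
    (Or.inr (Or.inr (Or.inr (Or.inr (Or.inl ⟨x, x', y, rfl⟩)))))
  rw [map_add, map_sub] at h
  rw [wedge_def, wedge_def, wedge_def]
  rw [sub_add_eq_add_sub, sub_eq_zero] at h
  exact eq_sub_iff_add_eq.mpr h

lemma my_lie_mem_derived (a b : L) : ⁅a, b⁆ ∈ derived k L :=
  LieSubmodule.lie_mem_lie (LieSubmodule.mem_top a) (LieSubmodule.mem_top b)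

lemma my_exists_commuting [Module.Finite k L] {m : ℕ} (hm : 2 ≤ m)
    (hL : IsHeisenberg k L m) (y : L) :
    ∃ u v : L, ⁅u, y⁆ = 0 ∧ ⁅v, y⁆ = 0 ∧ ⁅u, v⁆ ≠ 0 := by
  by_contra hcon
  push_neg at hcon
  obtain ⟨hcen, hdim, hder⟩ := hL
  set D : Submodule k L := (derived k L : Submodule k L) with hD
  have hderD : Module.finrank k D = 1 := hder
  let f : L →ₗ[k] L :=
    { toFun := fun u => ⁅u, y⁆
      map_add' := fun a b => add_lie a b y
      map_smul' := fun c a => smul_lie c a y }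
  set C := LinearMap.ker f with hC
  have hmemC : ∀ u : L, u ∈ C ↔ ⁅u, y⁆ = 0 := fun u => Iff.rfl
  -- finrank C ≥ 2m
  have h1 := LinearMap.finrank_range_add_finrank_ker f
  rw [← hC] at h1
  have hrange : LinearMap.range f ≤ D := by
    rintro _ ⟨u, rfl⟩; exact my_lie_mem_derived u y
  have h2 : Module.finrank k (LinearMap.range f) ≤ 1 := by
    calc Module.finrank k (LinearMap.range f) ≤ Module.finrank k D :=
          Submodule.finrank_mono hrange
      _ = 1 := hderD
  rw [hdim] at h1
  -- the map g : C → (L →ₗ D)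
  let g : C →ₗ[k] (L →ₗ[k] D) :=
    { toFun := fun u =>
        { toFun := fun w => ⟨⁅(u : L), w⁆, my_lie_mem_derived _ _⟩
          map_add' := fun a b => Subtype.ext (lie_add _ a b)
          map_smul' := fun c a => Subtype.ext (lie_smul c _ a) }
      map_add' := fun a b => LinearMap.ext fun w => Subtype.ext (add_lie _ _ w)
      map_smul' := fun c a => LinearMap.ext fun w => Subtype.ext (smul_lie c _ w) }
  have hgC : ∀ u : C, C ≤ LinearMap.ker (g u) := by
    intro u w hw
    exact Subtype.ext (hcon (u : L) w ((hmemC _).mp u.2) ((hmemC _).mp hw))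
  -- kernel of g is contained in the centre, which has dim 1
  have hkerg : Module.finrank k (LinearMap.ker g) ≤ 1 := by
    let j : LinearMap.ker g →ₗ[k] D :=
      { toFun := fun u => ⟨((u : C) : L), by
          have hu := u.2
          rw [LinearMap.mem_ker] at hu
          have hc : ((u : C) : L) ∈ LieAlgebra.center k L := by
            rw [LieModule.mem_maxTrivSubmodule]
            intro w
            have h1 := LinearMap.congr_fun hu w
            have h2 : ⁅((u : C) : L), w⁆ = 0 := congrArg Subtype.val h1
            rw [← lie_skew, h2, neg_zero]
          exact (by rw [hcen]; exact hc : ((u : C) : L) ∈ derived k L)⟩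
        map_add' := fun a b => rfl
        map_smul' := fun c a => rfl }
    have hj : Function.Injective j := by
      intro a b hab
      have h0 := Subtype.ext_iff.mp hab
      exact Subtype.ext (Subtype.ext h0)
    calc Module.finrank k (LinearMap.ker g) ≤ Module.finrank k D :=
          LinearMap.finrank_le_finrank_of_injective hj
      _ = 1 := hderD
  -- range of g factors through L ⧸ C
  have hrg : LinearMap.range g ≤ LinearMap.range
      (LinearMap.lcomp k D (C.mkQ)) := by
    rintro _ ⟨u, rfl⟩
    refine ⟨C.liftQ (g u) (hgC u), ?_⟩
    ext w
    simp
  have hrgle : Module.finrank k (LinearMap.range g) ≤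
      Module.finrank k ((L ⧸ C) →ₗ[k] D) := by
    calc Module.finrank k (LinearMap.range g)
        ≤ Module.finrank k (LinearMap.range (LinearMap.lcomp k D (C.mkQ))) :=
          Submodule.finrank_mono hrg
      _ ≤ _ := (LinearMap.lcomp k D (C.mkQ)).finrank_range_le
  have hhom : Module.finrank k ((L ⧸ C) →ₗ[k] D) =
      Module.finrank k (L ⧸ C) * Module.finrank k D :=
    Module.finrank_linearMap k k _ _
  have hq := Submodule.finrank_quotient_add_finrank C
  rw [hdim] at hq
  have h3 := LinearMap.finrank_range_add_finrank_ker g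
  rw [hderD] at hhom
  omega

end MyAux

/-- for `m ≥ 2` the derived subalgebra of `H(m)` lies in the exterior
center `Z^∧(H(m))`. -/
theorem heisenberg_derived_le_exteriorCenter (k : Type) [Field k] (L : Type u) [LieRing L]
    [LieAlgebra k L] [Module.Finite k L] (m : ℕ) (hm : 2 ≤ m) (hL : IsHeisenberg k L m) :
    (derived k L : Set L) ⊆ exteriorCenter k L := by
  intro x hx y
  obtain ⟨u, v, hu, hv, huv⟩ := my_exists_commuting hm hL y
  have hmem : ⁅u, v⁆ ∈ derived k L := my_lie_mem_derived u v
  have hnz : (⟨⁅u, v⁆, hmem⟩ : derived k L) ≠ 0 := fun h => huv (congrArg Subtype.val h)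
  obtain ⟨c, hcx⟩ := (finrank_eq_one_iff_of_nonzero' _ hnz).mp hL.2.2 ⟨x, hx⟩
  have hx' : x = c • ⁅u, v⁆ := (congrArg Subtype.val hcx).symm
  rw [hx', my_wedge_smul_left, my_wedge_lie_left, hu, hv, my_wedge_zero_right,
    my_wedge_zero_right, sub_zero, smul_zero]
end

section
/- Let L ≅ H(m) ⊕ A(k) be the direct sum of a Heisenberg Lie algebra of dimension 2m+1 and an abelian Lie algebra of dimension k. Then L is capable if and only if m = 1. -/
open Module Function

universe u v

open Module Function


section ForwardAux

variable (k : Type) [Field k]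
variable {H : Type u} [LieRing H] [LieAlgebra k H]

lemma lie_mem_derived (x y : H) : ⁅x, y⁆ ∈ derived k H :=
  LieSubmodule.lie_mem_lie (LieSubmodule.mem_top x) (LieSubmodule.mem_top y)

lemma exists_good_pair [Module.Finite k H] (m : ℕ) (hm : 2 ≤ m) (hH : IsHeisenberg k H m) :
    ∃ z : H, z ≠ 0 ∧ (∀ y : H, ⁅y, z⁆ = 0) ∧
      ∀ x : H, ∃ a b : H, ⁅a, b⁆ = z ∧ ⁅a, x⁆ = 0 ∧ ⁅b, x⁆ = 0 := by
  obtain ⟨hDC, hdim, hD1⟩ := hH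
  -- a nonzero element of the derived subalgebra
  have : Nontrivial (derived k H) :=
    Module.nontrivial_of_finrank_pos (R := k) (by rw [hD1]; norm_num)
  obtain ⟨z', hz'⟩ := exists_ne (0 : derived k H)
  set z : H := (z' : H) with hzdef
  have hz0 : z ≠ 0 := by
    intro h; exact hz' (Subtype.ext h)
  have hzc : ∀ y : H, ⁅y, z⁆ = 0 := by
    have hz : z ∈ LieAlgebra.center k H := by rw [← hDC]; exact z'.2
    exact fun y => (LieModule.mem_maxTrivSubmodule k H H z).mp hz y
  have hspan : ∀ w : (derived k H), ∃ c : k, c • z' = w :=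
    (finrank_eq_one_iff_of_nonzero' z' hz').mp hD1
  refine ⟨z, hz0, hzc, fun x => ?_⟩
  set W := LinearMap.ker ((LieAlgebra.ad k H) x) with hWdef
  have hWmem : ∀ w : H, w ∈ W ↔ ⁅x, w⁆ = 0 := fun w => by
    simp [hWdef, LinearMap.mem_ker, LieAlgebra.ad_apply]
  have hrange : LinearMap.range ((LieAlgebra.ad k H) x) ≤ (derived k H : Submodule k H) := by
    rintro _ ⟨w, rfl⟩
    exact lie_mem_derived k x w
  have hWbig : 2 * m ≤ finrank k W := by
    have h1 := LinearMap.finrank_range_add_finrank_ker ((LieAlgebra.ad k H) x)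
    rw [← hWdef] at h1
    have h2 : finrank k (LinearMap.range ((LieAlgebra.ad k H) x)) ≤ 1 := by
      have := Submodule.finrank_mono hrange
      have he : finrank k ((derived k H : Submodule k H)) = 1 := hD1
      omega
    omega
  by_cases hcase : ∃ a ∈ W, ∃ b ∈ W, ⁅a, b⁆ ≠ (0 : H)
  · obtain ⟨a, ha, b, hb, hab⟩ := hcase
    obtain ⟨c, hc⟩ := hspan ⟨⁅a, b⁆, lie_mem_derived k a b⟩
    have hc' : c • z = ⁅a, b⁆ := congrArg Subtype.val hc
    have hcne : c ≠ 0 := by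
      rintro rfl; rw [zero_smul] at hc'; exact hab hc'.symm
    refine ⟨c⁻¹ • a, b, ?_, ?_, ?_⟩
    · rw [smul_lie, ← hc', smul_smul, inv_mul_cancel₀ hcne, one_smul]
    · rw [smul_lie, ← lie_skew, (hWmem a).mp ha, neg_zero, smul_zero]
    · rw [← lie_skew, (hWmem b).mp hb, neg_zero]
  · exfalso
    push_neg at hcase
    by_cases hWtop : W = ⊤
    · have hder : derived k H = ⊥ := by
        rw [derived, LieSubmodule.lie_eq_bot_iff]
        intro a _ b _
        exact hcase a (by rw [hWtop]; trivial) b (by rw [hWtop]; trivial)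
      have hzb : z ∈ (⊥ : LieIdeal k H) := by rw [← hder]; exact z'.2
      exact hz0 ((LieSubmodule.mem_bot _).mp hzb)
    · obtain ⟨h₀, hh₀⟩ : ∃ h₀, h₀ ∉ W := by
        by_contra hcon
        push_neg at hcon
        exact hWtop (Submodule.eq_top_iff'.mpr hcon)
      have hlt : W < W ⊔ Submodule.span k {h₀} := by
        refine lt_of_le_of_ne le_sup_left (fun h => hh₀ ?_)
        rw [h]
        exact Submodule.mem_sup_right (Submodule.mem_span_singleton_self h₀)
      have hsup : W ⊔ Submodule.span k {h₀} = ⊤ := by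
        apply Submodule.eq_top_of_finrank_eq
        have l1 : finrank k W < finrank k (W ⊔ Submodule.span k {h₀} : Submodule k H) :=
          Submodule.finrank_lt_finrank_of_lt hlt
        have l2 : finrank k (W ⊔ Submodule.span k {h₀} : Submodule k H) ≤ finrank k H :=
          Submodule.finrank_le _
        omega
      set θ : W →ₗ[k] H := (LieAlgebra.ad k H h₀) ∘ₗ W.subtype with hθ
      have hθrange : LinearMap.range θ ≤ (derived k H : Submodule k H) := by
        rintro _ ⟨w, rfl⟩
        exact lie_mem_derived k h₀ (w : H)
      have hθker : ∀ w : W, θ w = 0 → (w : H) ∈ (LieAlgebra.center k H : Submodule k H) := by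
        intro w hw
        have hcent : ∀ y : H, ⁅y, (w : H)⁆ = 0 := by
          intro y
          have hy : y ∈ W ⊔ Submodule.span k {h₀} := by rw [hsup]; trivial
          obtain ⟨u, hu, v, hv, rfl⟩ := Submodule.mem_sup.mp hy
          obtain ⟨c, rfl⟩ := Submodule.mem_span_singleton.mp hv
          have h1 : ⁅u, (w : H)⁆ = 0 := by
            rw [← lie_skew, hcase (w : H) w.2 u hu, neg_zero]
          have h2 : ⁅h₀, (w : H)⁆ = 0 := hw
          rw [add_lie, h1, smul_lie, h2, smul_zero, add_zero]
        exact (LieModule.mem_maxTrivSubmodule k H H (w : H)).mpr hcent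
      have hCrank : finrank k (LieAlgebra.center k H) = 1 := by rw [← hDC]; exact hD1
      have hker1 : finrank k (LinearMap.ker θ) ≤ 1 := by
        rw [← hCrank]
        have hinj : Function.Injective
            (LinearMap.codRestrict (LieAlgebra.center k H : Submodule k H)
              (W.subtype ∘ₗ (LinearMap.ker θ).subtype)
              (fun w => hθker w w.2)) := by
          intro a b hab
          have h1 := congrArg Subtype.val hab
          exact Subtype.ext (Subtype.ext h1)
        exact LinearMap.finrank_le_finrank_of_injective hinj
      have hrank1 : finrank k (LinearMap.range θ) ≤ 1 := by
        have := Submodule.finrank_mono hθrange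
        have he : finrank k ((derived k H : Submodule k H)) = 1 := hD1
        omega
      have := LinearMap.finrank_range_add_finrank_ker θ
      omega

end ForwardAux

open Module Function


lemma not_capable_of_two_le (k : Type) [Field k] (H A : Type u) [LieRing H]
    [LieAlgebra k H] [LieRing A] [LieAlgebra k A] [Module.Finite k H]
    (m : ℕ) (hm : 2 ≤ m) (hH : IsHeisenberg k H m) :
    ¬ IsCapable k (H × A) := by
  rintro ⟨E, _, _, ⟨e⟩⟩
  obtain ⟨z, hz0, hzc, hpair⟩ := exists_good_pair k m hm hH
  set zL : H × A := (z, 0) with hzL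
  have hzL0 : zL ≠ 0 := fun h => hz0 (congrArg Prod.fst h)
  have hpairL : ∀ x : H × A, ∃ a b : H × A, ⁅a, b⁆ = zL ∧ ⁅a, x⁆ = 0 ∧ ⁅b, x⁆ = 0 := by
    intro x
    obtain ⟨a₀, b₀, h1, h2, h3⟩ := hpair x.1
    refine ⟨(a₀, 0), (b₀, 0), ?_, ?_, ?_⟩
    · show (⁅a₀, b₀⁆, ⁅(0 : A), (0 : A)⁆) = zL
      rw [h1, lie_zero]
    · show (⁅a₀, x.1⁆, ⁅(0 : A), x.2⁆) = 0
      rw [h2, zero_lie]; rfl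
    · show (⁅b₀, x.1⁆, ⁅(0 : A), x.2⁆) = 0
      rw [h3, zero_lie]; rfl
  set π : E →ₗ⁅k⁆ E ⧸ LieAlgebra.center k E := lieQuotMk k E (LieAlgebra.center k E) with hπ
  have hker : ∀ y : E, π y = 0 ↔ y ∈ LieAlgebra.center k E := by
    intro y
    show Submodule.Quotient.mk y = 0 ↔ _
    rw [Submodule.Quotient.mk_eq_zero]
    rfl
  have hsur : ∀ q : E ⧸ LieAlgebra.center k E, ∃ y : E, π y = q :=
    Submodule.Quotient.mk_surjective _
  obtain ⟨zhat, hzhat⟩ := hsur (e zL)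
  have he0 : e (0 : H × A) = 0 := e.toLieHom.map_zero
  have hcent : zhat ∈ LieAlgebra.center k E := by
    rw [LieModule.mem_maxTrivSubmodule]
    intro f
    obtain ⟨a, b, h1, h2, h3⟩ := hpairL (e.symm (π f))
    obtain ⟨ah, hah⟩ := hsur (e a)
    obtain ⟨bh, hbh⟩ := hsur (e b)
    have hab : π ⁅ah, bh⁆ = e zL := by
      rw [π.map_lie, hah, hbh, ← e.map_lie, h1]
    have hd : zhat - ⁅ah, bh⁆ ∈ LieAlgebra.center k E := by
      rw [← hker, map_sub, hzhat, hab, sub_self]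
    have hfa : ⁅f, ah⁆ ∈ LieAlgebra.center k E := by
      rw [← hker, π.map_lie]
      have := congrArg e h2
      rw [e.map_lie, e.apply_symm_apply, he0] at this
      rw [hah, ← lie_skew, this, neg_zero]
    have hfb : ⁅f, bh⁆ ∈ LieAlgebra.center k E := by
      rw [← hker, π.map_lie]
      have := congrArg e h3
      rw [e.map_lie, e.apply_symm_apply, he0] at this
      rw [hbh, ← lie_skew, this, neg_zero]
    have hsplit : ⁅f, zhat⁆ = ⁅f, ⁅ah, bh⁆⁆ + ⁅f, zhat - ⁅ah, bh⁆⁆ := by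
      rw [← lie_add, add_sub_cancel]
    rw [hsplit, leibniz_lie]
    have t1 : ⁅⁅f, ah⁆, bh⁆ = 0 := by
      rw [← lie_skew, (LieModule.mem_maxTrivSubmodule k E E _).mp hfa bh, neg_zero]
    have t2 : ⁅ah, ⁅f, bh⁆⁆ = 0 := (LieModule.mem_maxTrivSubmodule k E E _).mp hfb ah
    have t3 : ⁅f, zhat - ⁅ah, bh⁆⁆ = 0 := (LieModule.mem_maxTrivSubmodule k E E _).mp hd f
    rw [t1, t2, t3, add_zero, add_zero]
  have : e zL = 0 := by rw [← hzhat, hker]; exact hcent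
  apply hzL0
  have h2 := congrArg e.symm this
  rw [e.symm_apply_apply] at h2
  rw [h2]
  exact e.symm.toLieHom.map_zero

open Module Function


/-- The capable witness: a Lie algebra with centre quotient `H(1) × A`. -/
def CapWit (k : Type) (A : Type u) : Type u := (k × k × k × k × k) × A × A

namespace CapWit

variable {k : Type} [Field k] {A : Type u} [AddCommGroup A] [Module k A]

instance : AddCommGroup (CapWit k A) :=
  inferInstanceAs (AddCommGroup ((k × k × k × k × k) × A × A))

instance : Module k (CapWit k A) :=
  inferInstanceAs (Module k ((k × k × k × k × k) × A × A))

/-- Constructor. -/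
def mk' (x y z u v : k) (a c : A) : CapWit k A := ((x, y, z, u, v), a, c)

def x (p : CapWit k A) : k := p.1.1
def y (p : CapWit k A) : k := p.1.2.1
def z (p : CapWit k A) : k := p.1.2.2.1
def u (p : CapWit k A) : k := p.1.2.2.2.1
def v (p : CapWit k A) : k := p.1.2.2.2.2
def a (p : CapWit k A) : A := p.2.1
def c (p : CapWit k A) : A := p.2.2

lemma ext' {p q : CapWit k A} (hx : p.x = q.x) (hy : p.y = q.y) (hz : p.z = q.z)
    (hu : p.u = q.u) (hv : p.v = q.v) (ha : p.a = q.a) (hc : p.c = q.c) : p = q :=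
  Prod.ext (Prod.ext hx (Prod.ext hy (Prod.ext hz (Prod.ext hu hv))))
    (Prod.ext ha hc)

@[simp] lemma x_add (p q : CapWit k A) : (p + q).x = p.x + q.x := rfl
@[simp] lemma y_add (p q : CapWit k A) : (p + q).y = p.y + q.y := rfl
@[simp] lemma z_add (p q : CapWit k A) : (p + q).z = p.z + q.z := rfl
@[simp] lemma u_add (p q : CapWit k A) : (p + q).u = p.u + q.u := rfl
@[simp] lemma v_add (p q : CapWit k A) : (p + q).v = p.v + q.v := rfl
@[simp] lemma a_add (p q : CapWit k A) : (p + q).a = p.a + q.a := rfl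
@[simp] lemma c_add (p q : CapWit k A) : (p + q).c = p.c + q.c := rfl
@[simp] lemma x_smul (t : k) (p : CapWit k A) : (t • p).x = t * p.x := rfl
@[simp] lemma y_smul (t : k) (p : CapWit k A) : (t • p).y = t * p.y := rfl
@[simp] lemma z_smul (t : k) (p : CapWit k A) : (t • p).z = t * p.z := rfl
@[simp] lemma u_smul (t : k) (p : CapWit k A) : (t • p).u = t * p.u := rfl
@[simp] lemma v_smul (t : k) (p : CapWit k A) : (t • p).v = t * p.v := rfl
@[simp] lemma a_smul (t : k) (p : CapWit k A) : (t • p).a = t • p.a := rfl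
@[simp] lemma c_smul (t : k) (p : CapWit k A) : (t • p).c = t • p.c := rfl
@[simp] lemma x_zero : (0 : CapWit k A).x = 0 := rfl
@[simp] lemma y_zero : (0 : CapWit k A).y = 0 := rfl
@[simp] lemma z_zero : (0 : CapWit k A).z = 0 := rfl
@[simp] lemma u_zero : (0 : CapWit k A).u = 0 := rfl
@[simp] lemma v_zero : (0 : CapWit k A).v = 0 := rfl
@[simp] lemma a_zero : (0 : CapWit k A).a = 0 := rfl
@[simp] lemma c_zero : (0 : CapWit k A).c = 0 := rfl
@[simp] lemma x_mk (xx yy zz uu vv : k) (aa cc : A) : (mk' xx yy zz uu vv aa cc : CapWit k A).x = xx := rfl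
@[simp] lemma y_mk (xx yy zz uu vv : k) (aa cc : A) : (mk' xx yy zz uu vv aa cc : CapWit k A).y = yy := rfl
@[simp] lemma z_mk (xx yy zz uu vv : k) (aa cc : A) : (mk' xx yy zz uu vv aa cc : CapWit k A).z = zz := rfl
@[simp] lemma u_mk (xx yy zz uu vv : k) (aa cc : A) : (mk' xx yy zz uu vv aa cc : CapWit k A).u = uu := rfl
@[simp] lemma v_mk (xx yy zz uu vv : k) (aa cc : A) : (mk' xx yy zz uu vv aa cc : CapWit k A).v = vv := rfl
@[simp] lemma a_mk (xx yy zz uu vv : k) (aa cc : A) : (mk' xx yy zz uu vv aa cc : CapWit k A).a = aa := rfl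
@[simp] lemma c_mk (xx yy zz uu vv : k) (aa cc : A) : (mk' xx yy zz uu vv aa cc : CapWit k A).c = cc := rfl

/-- The bracket. -/
def brk (p q : CapWit k A) : CapWit k A :=
  mk' 0 0 (p.x * q.y - q.x * p.y) (p.x * q.z - q.x * p.z) (p.y * q.z - q.y * p.z)
    0 (p.x • q.a - q.x • p.a)

instance : LieRing (CapWit k A) where
  bracket := brk
  add_lie p q r := by
    apply ext' <;> simp [brk] <;> [skip; skip; skip; module] <;> ring
  lie_add p q r := by
    apply ext' <;> simp [brk] <;> [skip; skip; skip; module] <;> ring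
  lie_self p := by
    apply ext' <;> simp [brk]
  leibniz_lie p q r := by
    apply ext' <;> simp [brk] <;> ring

lemma brk_def (p q : CapWit k A) : ⁅p, q⁆ = brk p q := rfl

instance : LieAlgebra k (CapWit k A) where
  lie_smul t p q := by
    apply ext' <;> simp [brk_def, brk, smul_sub, smul_smul] <;> [skip; skip; skip; module] <;> ring

end CapWit

set_option maxHeartbeats 1000000 in
lemma capable_of_heisenberg_one (k : Type) [Field k] (H A : Type u) [LieRing H]
    [LieAlgebra k H] [LieRing A] [LieAlgebra k A] [Module.Finite k H]
    (hH : IsHeisenberg k H 1) (hA : IsLieAbelian A) :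
    IsCapable k (H × A) := by
  obtain ⟨hDC, hdim, hD1⟩ := hH
  norm_num at hdim
  -- find a non-vanishing bracket
  have hne : ¬ ∀ X Y : H, ⁅X, Y⁆ = 0 := by
    intro hall
    have hder : derived k H = ⊥ := by
      rw [derived, LieSubmodule.lie_eq_bot_iff]
      intro a _ b _; exact hall a b
    rw [hder] at hD1
    have : Nontrivial ((⊥ : LieIdeal k H)) :=
      Module.nontrivial_of_finrank_pos (R := k) (by rw [hD1]; norm_num)
    obtain ⟨w, hw⟩ := exists_ne (0 : (⊥ : LieIdeal k H))
    exact hw (Subtype.ext ((LieSubmodule.mem_bot _).mp w.2))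
  push_neg at hne
  obtain ⟨X, Y, hZ0⟩ := hne
  set Z : H := ⁅X, Y⁆ with hZdef
  have hZder : Z ∈ derived k H := lie_mem_derived k X Y
  have hZcen : ∀ h : H, ⁅h, Z⁆ = 0 := by
    have : Z ∈ LieAlgebra.center k H := by rw [← hDC]; exact hZder
    exact (LieModule.mem_maxTrivSubmodule k H H Z).mp this
  have hZcen' : ∀ h : H, ⁅Z, h⁆ = 0 := fun h => by
    rw [← lie_skew, hZcen h, neg_zero]
  have hYX : ⁅Y, X⁆ = -Z := by rw [← lie_skew, hZdef]
  -- linear independence of X, Y, Z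
  have hli : LinearIndependent k ![X, Y, Z] := by
    rw [Fintype.linearIndependent_iff]
    intro g hg
    rw [Fin.sum_univ_three] at hg
    simp only [Matrix.cons_val_zero, Matrix.cons_val_one, Matrix.head_cons,
      Matrix.cons_val_two, Matrix.tail_cons] at hg
    have h0 : g 0 = 0 := by
      have := congrArg (fun w => ⁅w, Y⁆) hg
      simp only [add_lie, smul_lie, lie_self, smul_zero, hZcen' Y, zero_lie,
        add_zero, ← hZdef] at this
      rcases smul_eq_zero.mp this with h | h
      · exact h
      · exact absurd h hZ0
    have h1 : g 1 = 0 := by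
      have := congrArg (fun w => ⁅w, X⁆) hg
      simp only [add_lie, smul_lie, lie_self, smul_zero, hZcen' X, hYX,
        zero_add, add_zero, zero_lie, smul_neg] at this
      rcases neg_eq_zero.mp this with h
      rcases smul_eq_zero.mp h with h | h
      · exact h
      · exact absurd h hZ0
    have h2 : g 2 = 0 := by
      rw [h0, h1, zero_smul, zero_smul, zero_add, zero_add] at hg
      rcases smul_eq_zero.mp hg with h | h
      · exact h
      · exact absurd h hZ0
    intro i
    fin_cases i <;> assumption
  -- spanning
  have hspan : ∀ h : H, ∃ cf : Fin 3 → k, cf 0 • X + cf 1 • Y + cf 2 • Z = h := by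
    intro h
    have hsp : Submodule.span k (Set.range ![X, Y, Z]) = ⊤ := by
      have := (basisOfLinearIndependentOfCardEqFinrank hli (by simp [hdim])).span_eq
      rwa [coe_basisOfLinearIndependentOfCardEqFinrank] at this
    have hmem : h ∈ Submodule.span k (Set.range ![X, Y, Z]) := by rw [hsp]; trivial
    obtain ⟨cf, hcf⟩ := (Submodule.mem_span_range_iff_exists_fun k).mp hmem
    refine ⟨cf, ?_⟩
    rw [Fin.sum_univ_three] at hcf
    simpa using hcf
  -- the morphism
  let φ : CapWit k A →ₗ⁅k⁆ H × A :=
    { toFun := fun p => (p.x • X + p.y • Y + p.z • Z, p.a)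
      map_add' := fun p q => by
        refine Prod.ext ?_ ?_ <;> simp [add_smul] <;> abel
      map_smul' := fun t p => by
        refine Prod.ext ?_ ?_ <;> simp [mul_smul, smul_add]
      map_lie' := fun {p q} => by
        refine Prod.ext ?_ ?_
        · show (⁅p, q⁆.x • X + ⁅p, q⁆.y • Y + ⁅p, q⁆.z • Z) = _
          rw [CapWit.brk_def]
          simp only [CapWit.brk, CapWit.x_mk, CapWit.y_mk, CapWit.z_mk,
            zero_smul, zero_add]
          show _ = ⁅p.x • X + p.y • Y + p.z • Z, q.x • X + q.y • Y + q.z • Z⁆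
          simp only [lie_add, add_lie, lie_smul, smul_lie, lie_self, smul_zero,
            hZcen, hZcen', hYX, ← hZdef, smul_neg, zero_add, add_zero, smul_smul]
          module
        · show (⁅p, q⁆.a) = ⁅p.a, q.a⁆
          rw [CapWit.brk_def]
          simp only [CapWit.brk, CapWit.a_mk]
          rw [trivial_lie_zero] }
  have hφ : ∀ p : CapWit k A, φ p = (p.x • X + p.y • Y + p.z • Z, p.a) := fun _ => rfl
  -- kernel is the centre
  have hker : ∀ p : CapWit k A, φ p = 0 ↔ p ∈ LieAlgebra.center k (CapWit k A) := by
    intro p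
    constructor
    · intro hp
      rw [hφ, Prod.ext_iff] at hp
      obtain ⟨hp1, hp2⟩ := hp
      have hcoord : ∀ i, (![p.x, p.y, p.z] : Fin 3 → k) i = 0 := by
        apply Fintype.linearIndependent_iff.mp hli
        rw [Fin.sum_univ_three]
        simpa using hp1
      have hx := hcoord 0
      have hy := hcoord 1
      have hz := hcoord 2
      simp only [Matrix.cons_val_zero, Matrix.cons_val_one, Matrix.head_cons,
        Matrix.cons_val_two, Matrix.tail_cons] at hx hy hz
      rw [LieModule.mem_maxTrivSubmodule]
      intro q
      apply CapWit.ext' <;>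
        simp [CapWit.brk_def, CapWit.brk, hx, hy, hz, show p.a = 0 from hp2]
    · intro hp
      have hb := (LieModule.mem_maxTrivSubmodule k _ _ p).mp hp
      have h1 := hb (CapWit.mk' 1 0 0 0 0 0 0)
      have h2 := hb (CapWit.mk' 0 1 0 0 0 0 0)
      have hy : p.y = 0 := by
        have := congrArg CapWit.z h1
        simpa [CapWit.brk_def, CapWit.brk] using this
      have hz : p.z = 0 := by
        have := congrArg CapWit.u h1
        simpa [CapWit.brk_def, CapWit.brk] using this
      have ha : p.a = 0 := by
        have := congrArg CapWit.c h1
        simpa [CapWit.brk_def, CapWit.brk] using this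
      have hx : p.x = 0 := by
        have := congrArg CapWit.z h2
        simpa [CapWit.brk_def, CapWit.brk] using this
      rw [hφ, hx, hy, hz, ha]
      simp
  -- quotient map is an isomorphism
  have hle : LieAlgebra.center k (CapWit k A) ≤ φ.ker := by
    intro p hp
    rw [LieHom.mem_ker]
    exact (hker p).mpr hp
  set ψ : (CapWit k A ⧸ LieAlgebra.center k (CapWit k A)) →ₗ⁅k⁆ H × A :=
    lieQuotLift _ φ hle with hψ
  have hψmk : ∀ p : CapWit k A,
      ψ (lieQuotMk k _ (LieAlgebra.center k (CapWit k A)) p) = φ p := fun _ => rfl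
  have hbij : Function.Bijective ψ := by
    constructor
    · intro q1 q2 h
      obtain ⟨p1, rfl⟩ := Submodule.Quotient.mk_surjective _ q1
      obtain ⟨p2, rfl⟩ := Submodule.Quotient.mk_surjective _ q2
      have he : φ p1 = φ p2 := h
      have : φ (p1 - p2) = 0 := by rw [map_sub, he, sub_self]
      exact (Submodule.Quotient.eq _).mpr ((hker _).mp this)
    · intro y
      have : ∃ p : CapWit k A, φ p = y := by
        obtain ⟨h, a⟩ := y
        obtain ⟨cf, hcf⟩ := hspan h
        exact ⟨CapWit.mk' (cf 0) (cf 1) (cf 2) 0 0 a 0, by rw [hφ]; simp [hcf]⟩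
      obtain ⟨p, hp⟩ := this
      exact ⟨Submodule.Quotient.mk p, hp⟩
  exact ⟨CapWit k A, inferInstance, inferInstance,
    ⟨(LieEquiv.ofBijective ψ hbij).symm⟩⟩

/-- `H(m) ⊕ A(j)` is capable iff `m = 1`. -/
theorem heisenberg_sum_abelian_capable_iff (k : Type) [Field k] (H A : Type u) [LieRing H]
    [LieAlgebra k H] [LieRing A] [LieAlgebra k A] [Module.Finite k H] [Module.Finite k A]
    (m j : ℕ) (hm : 1 ≤ m) (hH : IsHeisenberg k H m) (hA : IsLieAbelian A)
    (hAd : Module.finrank k A = j) :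
    IsCapable k (H × A) ↔ m = 1 := by
  constructor
  · intro hc
    by_contra hne
    exact not_capable_of_two_le k H A m (by omega) hH hc
  · rintro rfl
    exact capable_of_heisenberg_one k H A hH hA
end

section
/- The Lie algebra H(1) ⊕ A(1) is capable; moreover its Schur multiplier has dimension 4, while M((H(1) ⊕ A(1))/A(1)) = M(H(1)) has dimension 2. -/
set_option maxHeartbeats 4000000


open Module Function

universe u v

/-! ### Auxiliary machinery for the proof -/

section ExtAux

variable (k : Type) [Field k]
variable (L : Type u) [LieRing L] [LieAlgebra k L]
variable (V : Type) [AddCommGroup V] [Module k V]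
variable (ω : L →ₗ[k] L →ₗ[k] V)

/-- The Lie ring structure on `L × V` attached to a 2-cocycle `ω`. -/
def extLieRing (h1 : ∀ u : L, ω u u = 0)
    (h2 : ∀ u v t : L, ω u ⁅v, t⁆ = ω ⁅u, v⁆ t + ω v ⁅u, t⁆) : LieRing (L × V) where
  bracket x y := (⁅x.1, y.1⁆, ω x.1 y.1)
  add_lie x y z := by
    show (⁅x.1 + y.1, z.1⁆, ω (x.1 + y.1) z.1) =
      (⁅x.1, z.1⁆ + ⁅y.1, z.1⁆, ω x.1 z.1 + ω y.1 z.1)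
    simp [add_lie]
  lie_add x y z := by
    show (⁅x.1, y.1 + z.1⁆, ω x.1 (y.1 + z.1)) =
      (⁅x.1, y.1⁆ + ⁅x.1, z.1⁆, ω x.1 y.1 + ω x.1 z.1)
    simp [lie_add]
  lie_self x := by
    show (⁅x.1, x.1⁆, ω x.1 x.1) = (0, 0)
    simp [h1]
  leibniz_lie x y z := by
    show (⁅x.1, ⁅y.1, z.1⁆⁆, ω x.1 ⁅y.1, z.1⁆) =
      (⁅⁅x.1, y.1⁆, z.1⁆ + ⁅y.1, ⁅x.1, z.1⁆⁆, ω ⁅x.1, y.1⁆ z.1 + ω y.1 ⁅x.1, z.1⁆)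
    rw [h2, leibniz_lie x.1 y.1 z.1]

/-- The Lie algebra structure on `L × V` attached to a 2-cocycle `ω`. -/
def extLieAlgebra (h1 : ∀ u : L, ω u u = 0)
    (h2 : ∀ u v t : L, ω u ⁅v, t⁆ = ω ⁅u, v⁆ t + ω v ⁅u, t⁆) :
    @LieAlgebra k (L × V) _ (extLieRing k L V ω h1 h2) :=
  letI := extLieRing k L V ω h1 h2
  { (inferInstance : Module k (L × V)) with
    lie_smul := fun c x y => by
      show (⁅x.1, c • y.1⁆, ω x.1 (c • y.1)) = (c • ⁅x.1, y.1⁆, c • ω x.1 y.1)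
      rw [lie_smul, map_smul] }

end ExtAux

section MainAux

variable (k : Type) [Field k]
variable (L : Type u) [LieRing L] [LieAlgebra k L]

lemma pres_of_apply (u : L) : pres k L (FreeLieAlgebra.of k u) = u := by
  simp [pres, FreeLieAlgebra.lift_of_apply]

lemma diff_of_mem_ker (f : FreeLieAlgebra k L) :
    f - FreeLieAlgebra.of k (pres k L f) ∈ (pres k L).ker := by
  rw [LieHom.mem_ker, map_sub, pres_of_apply, sub_self]

variable {L' : Type v} [LieRing L'] [LieAlgebra k L']

/-- Abstract computation of the dimension of `multOf k L ρ` from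
(a) a finite family spanning the derived subalgebra of the free Lie algebra modulo
`⁅ker ρ, F⁆`, and (b) a central extension detecting the relevant classes. -/
theorem multOf_finrank_eq (ρ : FreeLieAlgebra k L →ₗ⁅k⁆ L')
    (hker : (pres k L).ker ≤ ρ.ker) (m : ℕ) (g : Fin (m + 1) → FreeLieAlgebra k L)
    (hgD : ∀ i, g i ∈ derived k (FreeLieAlgebra k L))
    (hgK : ∀ i : Fin m, g i.succ ∈ ρ.ker)
    (hg0 : ρ (g 0) ≠ 0)
    (hspan : ∀ u v : L, ⁅FreeLieAlgebra.of k u, FreeLieAlgebra.of k v⁆ ∈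
      Submodule.span k (Set.range g) ⊔
        (⁅ρ.ker, (⊤ : LieIdeal k (FreeLieAlgebra k L))⁆ :
          LieIdeal k (FreeLieAlgebra k L)).toSubmodule)
    (E : Type*) [LieRing E] [LieAlgebra k E] (Φ : FreeLieAlgebra k L →ₗ⁅k⁆ E)
    (hΦK : ∀ f ∈ ρ.ker, Φ f ∈ LieAlgebra.center k E)
    (μ₀ : E →ₗ[k] (Fin m → k))
    (hμ : ∀ i : Fin m, μ₀ (Φ (g i.succ)) = Pi.single i 1) :
    Module.finrank k (multOf k L ρ) = m := by
  classical
  have hcongr : ∀ f f' : FreeLieAlgebra k L, ⁅f, f'⁆ -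
      ⁅FreeLieAlgebra.of k (pres k L f), FreeLieAlgebra.of k (pres k L f')⁆ ∈
      (⁅ρ.ker, (⊤ : LieIdeal k (FreeLieAlgebra k L))⁆ :
        LieIdeal k (FreeLieAlgebra k L)).toSubmodule := by
    intro f f'
    have h1 : ⁅f - FreeLieAlgebra.of k (pres k L f), f'⁆ ∈
        (⁅ρ.ker, (⊤ : LieIdeal k (FreeLieAlgebra k L))⁆ : LieIdeal k (FreeLieAlgebra k L)) :=
      LieSubmodule.lie_mem_lie (hker (diff_of_mem_ker k L f)) (LieSubmodule.mem_top _)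
    have h2 : ⁅f' - FreeLieAlgebra.of k (pres k L f'), FreeLieAlgebra.of k (pres k L f)⁆ ∈
        (⁅ρ.ker, (⊤ : LieIdeal k (FreeLieAlgebra k L))⁆ : LieIdeal k (FreeLieAlgebra k L)) :=
      LieSubmodule.lie_mem_lie (hker (diff_of_mem_ker k L f')) (LieSubmodule.mem_top _)
    have heq : ⁅f, f'⁆ -
        ⁅FreeLieAlgebra.of k (pres k L f), FreeLieAlgebra.of k (pres k L f')⁆ =
        ⁅f - FreeLieAlgebra.of k (pres k L f), f'⁆ -
        ⁅f' - FreeLieAlgebra.of k (pres k L f'), FreeLieAlgebra.of k (pres k L f)⁆ := by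
      rw [sub_lie, sub_lie]
      rw [← lie_skew f' (FreeLieAlgebra.of k (pres k L f)),
        ← lie_skew (FreeLieAlgebra.of k (pres k L f')) (FreeLieAlgebra.of k (pres k L f))]
      abel
    rw [heq]
    exact sub_mem ((LieSubmodule.mem_toSubmodule _).mpr h1)
      ((LieSubmodule.mem_toSubmodule _).mpr h2)
  have hVbr : ∀ f f' : FreeLieAlgebra k L, ⁅f, f'⁆ ∈
      Submodule.span k (Set.range g) ⊔
        (⁅ρ.ker, (⊤ : LieIdeal k (FreeLieAlgebra k L))⁆ :
          LieIdeal k (FreeLieAlgebra k L)).toSubmodule := by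
    intro f f'
    have h1 := hcongr f f'
    have h2 := hspan (pres k L f) (pres k L f')
    have heq : ⁅f, f'⁆ = (⁅f, f'⁆ -
        ⁅FreeLieAlgebra.of k (pres k L f), FreeLieAlgebra.of k (pres k L f')⁆) +
        ⁅FreeLieAlgebra.of k (pres k L f), FreeLieAlgebra.of k (pres k L f')⁆ := by abel
    rw [heq]
    exact add_mem (Submodule.mem_sup_right h1) h2
  have hD : (derived k (FreeLieAlgebra k L)).toSubmodule ≤
      Submodule.span k (Set.range g) ⊔
        (⁅ρ.ker, (⊤ : LieIdeal k (FreeLieAlgebra k L))⁆ :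
          LieIdeal k (FreeLieAlgebra k L)).toSubmodule := by
    rw [derived, LieSubmodule.lieIdeal_oper_eq_linear_span', Submodule.span_le]
    rintro t ⟨x, -, n, -, rfl⟩
    exact hVbr x n
  have hΦT : ∀ s ∈ (⁅ρ.ker, (⊤ : LieIdeal k (FreeLieAlgebra k L))⁆ :
      LieIdeal k (FreeLieAlgebra k L)).toSubmodule, Φ s = 0 := by
    have hle : (⁅ρ.ker, (⊤ : LieIdeal k (FreeLieAlgebra k L))⁆ :
        LieIdeal k (FreeLieAlgebra k L)).toSubmodule ≤ LinearMap.ker Φ.toLinearMap := by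
      rw [LieSubmodule.lieIdeal_oper_eq_linear_span', Submodule.span_le]
      rintro x ⟨r, hr, n, -, rfl⟩
      have hc := (LieModule.mem_maxTrivSubmodule k E E _).mp (hΦK r hr)
      simp only [SetLike.mem_coe, LinearMap.mem_ker, LieHom.coe_toLinearMap, LieHom.map_lie]
      rw [← lie_skew, hc, neg_zero]
    intro s hs
    exact hle hs
  have memK : ∀ i : Fin m, g i.succ ∈
      (ρ.ker ⊓ derived k (FreeLieAlgebra k L)).toSubmodule := fun i =>
    (LieSubmodule.mem_toSubmodule _).mpr ((LieSubmodule.mem_inf _ _ _).mpr ⟨hgK i, hgD _⟩)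
  let P : Submodule k (ρ.ker ⊓ derived k (FreeLieAlgebra k L)).toSubmodule :=
    ((⁅ρ.ker, (⊤ : LieIdeal k (FreeLieAlgebra k L))⁆ :
        LieIdeal k (FreeLieAlgebra k L)).toSubmodule.comap
      (ρ.ker ⊓ derived k (FreeLieAlgebra k L)).toSubmodule.subtype)
  let cl : Fin m → ((ρ.ker ⊓ derived k (FreeLieAlgebra k L)).toSubmodule ⧸ P) :=
    fun i => Submodule.Quotient.mk ⟨g i.succ, memK i⟩
  have hTK : (⁅ρ.ker, (⊤ : LieIdeal k (FreeLieAlgebra k L))⁆ :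
      LieIdeal k (FreeLieAlgebra k L)) ≤ ρ.ker := LieSubmodule.lie_le_left _ _
  have hspanM : (⊤ : Submodule k ((ρ.ker ⊓ derived k (FreeLieAlgebra k L)).toSubmodule ⧸ P)) ≤
      Submodule.span k (Set.range cl) := by
    rintro a -
    obtain ⟨⟨t, ht⟩, rfl⟩ := Submodule.Quotient.mk_surjective P a
    have htK : t ∈ ρ.ker ⊓ derived k (FreeLieAlgebra k L) :=
      (LieSubmodule.mem_toSubmodule _).mp ht
    have htD : t ∈ (derived k (FreeLieAlgebra k L)).toSubmodule :=
      (LieSubmodule.mem_toSubmodule _).mpr ((LieSubmodule.mem_inf _ _ _).mp htK).2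
    obtain ⟨p, hp, s, hsT, hsum⟩ := Submodule.mem_sup.mp (hD htD)
    obtain ⟨c, hc⟩ := (Submodule.mem_span_range_iff_exists_fun k).mp hp
    have hρs : ρ s = 0 :=
      LieHom.mem_ker.mp (hTK ((LieSubmodule.mem_toSubmodule _).mp hsT))
    have hρt : ρ t = 0 := LieHom.mem_ker.mp ((LieSubmodule.mem_inf _ _ _).mp htK).1
    have hc0 : c 0 = 0 := by
      have hρp : ρ p = 0 := by
        have h := congrArg ρ hsum
        rw [show ρ (p + s) = ρ p + ρ s from map_add ρ p s, hρs, add_zero, hρt] at h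
        exact h
      have hρsum : ρ (∑ i, c i • g i) = ∑ i, c i • ρ (g i) := by
        rw [show ρ (∑ i, c i • g i) = ρ.toLinearMap (∑ i, c i • g i) from rfl, map_sum]
        simp
      rw [← hc, hρsum, Fin.sum_univ_succ] at hρp
      have hz : ∀ i : Fin m, c i.succ • ρ (g i.succ) = 0 := fun i => by
        rw [LieHom.mem_ker.mp (hgK i), smul_zero]
      rw [Finset.sum_congr rfl (fun i _ => hz i), Finset.sum_const_zero, add_zero] at hρp
      rcases smul_eq_zero.mp hρp with h | h
      · exact h
      · exact absurd h hg0
    have hdiff : ((⟨t, ht⟩ : (ρ.ker ⊓ derived k (FreeLieAlgebra k L)).toSubmodule) -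
        ∑ i : Fin m, c i.succ •
          (⟨g i.succ, memK i⟩ : (ρ.ker ⊓ derived k (FreeLieAlgebra k L)).toSubmodule)) ∈ P := by
      show _ ∈ Submodule.comap _ _
      rw [Submodule.mem_comap]
      have hval : ((ρ.ker ⊓ derived k (FreeLieAlgebra k L)).toSubmodule.subtype)
          ((⟨t, ht⟩ : (ρ.ker ⊓ derived k (FreeLieAlgebra k L)).toSubmodule) -
          ∑ i : Fin m, c i.succ •
            (⟨g i.succ, memK i⟩ : (ρ.ker ⊓ derived k (FreeLieAlgebra k L)).toSubmodule)) =
          t - ∑ i : Fin m, c i.succ • g i.succ := by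
        rw [map_sub, map_sum]
        rfl
      rw [hval]
      have heq2 : t - ∑ i : Fin m, c i.succ • g i.succ = s := by
        rw [← hsum, ← hc, Fin.sum_univ_succ, hc0, zero_smul, zero_add]
        abel
      rw [heq2]
      exact hsT
    have hmk : (Submodule.Quotient.mk
        (⟨t, ht⟩ : (ρ.ker ⊓ derived k (FreeLieAlgebra k L)).toSubmodule) :
        (ρ.ker ⊓ derived k (FreeLieAlgebra k L)).toSubmodule ⧸ P) =
        ∑ i : Fin m, c i.succ • cl i := by
      have h2 : (∑ i : Fin m, c i.succ • cl i) =
          P.mkQ (∑ i : Fin m, c i.succ •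
            (⟨g i.succ, memK i⟩ : (ρ.ker ⊓ derived k (FreeLieAlgebra k L)).toSubmodule)) := by
        rw [map_sum]
        refine Finset.sum_congr rfl fun i _ => ?_
        rw [map_smul, Submodule.mkQ_apply]
      rw [h2, Submodule.mkQ_apply, Submodule.Quotient.eq]
      exact hdiff
    rw [hmk]
    exact Submodule.sum_mem _ fun i _ =>
      Submodule.smul_mem _ _ (Submodule.subset_span (Set.mem_range_self i))
  let μ : ((ρ.ker ⊓ derived k (FreeLieAlgebra k L)).toSubmodule ⧸ P) →ₗ[k] (Fin m → k) :=
    Submodule.liftQ P ((μ₀ ∘ₗ Φ.toLinearMap) ∘ₗ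
      (ρ.ker ⊓ derived k (FreeLieAlgebra k L)).toSubmodule.subtype)
      (by
        rintro ⟨x, hx⟩ hmem
        have hxT : x ∈ (⁅ρ.ker, (⊤ : LieIdeal k (FreeLieAlgebra k L))⁆ :
            LieIdeal k (FreeLieAlgebra k L)).toSubmodule := hmem
        simp only [LinearMap.mem_ker, LinearMap.comp_apply, Submodule.coe_subtype,
          LieHom.coe_toLinearMap]
        rw [hΦT x hxT, map_zero])
  have hμcl : ∀ i : Fin m, μ (cl i) = Pi.single i 1 := by
    intro i
    exact hμ i
  let θ : (Fin m → k) →ₗ[k] ((ρ.ker ⊓ derived k (FreeLieAlgebra k L)).toSubmodule ⧸ P) :=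
    (Pi.basisFun k (Fin m)).constr k cl
  have hθb : ∀ i, θ (Pi.basisFun k (Fin m) i) = cl i := fun i =>
    (Pi.basisFun k (Fin m)).constr_basis k cl i
  have hcomp : μ.comp θ = LinearMap.id := by
    apply (Pi.basisFun k (Fin m)).ext
    intro i
    rw [LinearMap.comp_apply, hθb, hμcl, LinearMap.id_apply, Pi.basisFun_apply]
  have hinj : Function.Injective θ := by
    have hli : Function.LeftInverse μ θ := fun x => by
      calc μ (θ x) = (μ.comp θ) x := rfl
        _ = x := by rw [hcomp]; rfl
    exact hli.injective
  have hsurj : Function.Surjective θ := by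
    rw [← LinearMap.range_eq_top, ← top_le_iff]
    refine le_trans hspanM (Submodule.span_le.mpr ?_)
    rintro x ⟨i, rfl⟩
    exact ⟨Pi.basisFun k (Fin m) i, hθb i⟩
  have e : (Fin m → k) ≃ₗ[k] ((ρ.ker ⊓ derived k (FreeLieAlgebra k L)).toSubmodule ⧸ P) :=
    LinearEquiv.ofBijective θ ⟨hinj, hsurj⟩
  show Module.finrank k ((ρ.ker ⊓ derived k (FreeLieAlgebra k L)).toSubmodule ⧸ P) = m
  rw [← e.finrank_eq, Module.finrank_fin_fun]

lemma lie_comm_neg {R : Type*} {I : Type*} [CommRing R] [LieRing I] [LieAlgebra R I]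
    (a b : I) : ⁅a, b⁆ = -⁅b, a⁆ := (lie_skew a b).symm

lemma lie_mem_lie_right {R : Type*} {L' : Type*} [CommRing R] [LieRing L'] [LieAlgebra R L']
    {I J : LieIdeal R L'} {x y : L'} (hy : y ∈ I) (hx : x ∈ J) : ⁅x, y⁆ ∈ ⁅I, J⁆ := by
  rw [lie_comm_neg (R := R) x y]
  exact neg_mem (LieSubmodule.lie_mem_lie hy hx)

lemma flie_smul (c : k) (x y : FreeLieAlgebra k L) : ⁅x, c • y⁆ = c • ⁅x, y⁆ :=
  lie_smul c x y

lemma presQ_of (N : LieIdeal k L) (u : L) :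
    presQ k L N (FreeLieAlgebra.of k u) = lieQuotMk k L N u := by
  rw [presQ, LieHom.comp_apply, pres_of_apply]

lemma lieQuotMk_eq_zero (N : LieIdeal k L) (u : L) :
    lieQuotMk k L N u = 0 ↔ u ∈ N := by
  show ((N : Submodule k L).mkQ u = 0) ↔ _
  rw [Submodule.mkQ_apply, Submodule.Quotient.mk_eq_zero]
  exact LieSubmodule.mem_toSubmodule N

end MainAux

section HeisAux

variable {k : Type} [Field k]
variable {M : Type u} [AddCommGroup M] [Module k M]

/-- The 2-cocycle used for the two-dimensional central extension of `H(1)`. -/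
noncomputable def omega2 (r1 r2 r3 : M →ₗ[k] k) : M →ₗ[k] M →ₗ[k] (Fin 2 → k) :=
  LinearMap.mk₂ k
    (fun u v => ![r1 u * r3 v - r3 u * r1 v, r2 u * r3 v - r3 u * r2 v])
    (fun m1 m2 n => by funext i; fin_cases i <;> simp <;> ring)
    (fun c m n => by funext i; fin_cases i <;> simp <;> ring)
    (fun m n1 n2 => by funext i; fin_cases i <;> simp <;> ring)
    (fun c m n => by funext i; fin_cases i <;> simp <;> ring)

@[simp] lemma omega2_apply (r1 r2 r3 : M →ₗ[k] k) (u v : M) :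
    omega2 r1 r2 r3 u v =
      ![r1 u * r3 v - r3 u * r1 v, r2 u * r3 v - r3 u * r2 v] := rfl

/-- The 2-cocycle used for the four-dimensional central extension of `H(1) ⊕ A(1)`. -/
noncomputable def omega4 (r1 r2 r3 r4 : M →ₗ[k] k) : M →ₗ[k] M →ₗ[k] (Fin 4 → k) :=
  LinearMap.mk₂ k
    (fun u v => ![r1 u * r3 v - r3 u * r1 v, r2 u * r3 v - r3 u * r2 v,
      r1 u * r4 v - r4 u * r1 v, r2 u * r4 v - r4 u * r2 v])
    (fun m1 m2 n => by funext i; fin_cases i <;> simp <;> ring)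
    (fun c m n => by funext i; fin_cases i <;> simp <;> ring)
    (fun m n1 n2 => by funext i; fin_cases i <;> simp <;> ring)
    (fun c m n => by funext i; fin_cases i <;> simp <;> ring)

@[simp] lemma omega4_apply (r1 r2 r3 r4 : M →ₗ[k] k) (u v : M) :
    omega4 r1 r2 r3 r4 u v =
      ![r1 u * r3 v - r3 u * r1 v, r2 u * r3 v - r3 u * r2 v,
        r1 u * r4 v - r4 u * r1 v, r2 u * r4 v - r4 u * r2 v] := rfl

variable {H : Type u} [LieRing H] [LieAlgebra k H] [Module.Finite k H]

/-- From the `IsHeisenberg` hypothesis, extract a basis `x, y, z` with `⁅x, y⁆ = z`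
and `z` central and nonzero. -/
lemma heis_basis (hH : IsHeisenberg k H 1) :
    ∃ b : Basis (Fin 3) k H, ⁅b 0, b 1⁆ = b 2 ∧ (∀ u : H, ⁅u, b 2⁆ = 0) ∧ b 2 ≠ 0 := by
  obtain ⟨hde, hdim, hder⟩ := hH
  have hne : ∃ x y : H, ⁅x, y⁆ ≠ 0 := by
    by_contra hcon
    push_neg at hcon
    have hbot : derived k H = ⊥ := by
      rw [derived, LieSubmodule.lie_eq_bot_iff]
      exact fun x _ m _ => hcon x m
    rw [hbot] at hder
    have hsub : Subsingleton (⊥ : LieIdeal k H) := by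
      constructor
      rintro ⟨a, ha⟩ ⟨b, hb⟩
      have ha' := (LieSubmodule.mem_bot _).mp ha
      have hb' := (LieSubmodule.mem_bot _).mp hb
      exact Subtype.ext (ha'.trans hb'.symm)
    rw [Module.finrank_zero_of_subsingleton] at hder
    exact zero_ne_one hder
  obtain ⟨x, y, hxy⟩ := hne
  have hzmem : ⁅x, y⁆ ∈ derived k H := by
    rw [derived]
    exact LieSubmodule.lie_mem_lie (LieSubmodule.mem_top x) (LieSubmodule.mem_top y)
  have hzc : ∀ u : H, ⁅u, ⁅x, y⁆⁆ = 0 := by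
    rw [hde] at hzmem
    exact (LieModule.mem_maxTrivSubmodule k H H _).mp hzmem
  have hzc' : ∀ u : H, ⁅(⁅x, y⁆ : H), u⁆ = 0 := fun u => by
    have h := lie_skew u (⁅x, y⁆ : H)
    rw [hzc u] at h
    exact neg_eq_zero.mp h
  have hli : LinearIndependent k ![x, y, ⁅x, y⁆] := by
    rw [Fintype.linearIndependent_iff]
    intro c hc
    rw [Fin.sum_univ_three] at hc
    simp only [Matrix.cons_val_zero, Matrix.cons_val_one, Matrix.head_cons,
      Matrix.cons_val_two, Matrix.tail_cons] at hc
    have h0 : c 0 = 0 := by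
      have h := congrArg (fun w => ⁅w, y⁆) hc
      simp only [add_lie, smul_lie, lie_self, zero_lie, hzc' y, smul_zero, add_zero] at h
      exact (smul_eq_zero.mp h).resolve_right hxy
    have h1 : c 1 = 0 := by
      have h := congrArg (fun w => ⁅w, x⁆) hc
      simp only [add_lie, smul_lie, lie_self, zero_lie, hzc' x, smul_zero, zero_add,
        add_zero] at h
      have h' : ⁅y, x⁆ = -⁅x, y⁆ := by
        have := lie_skew x y
        rw [← this, neg_neg]
      rw [h', smul_neg, neg_eq_zero] at h
      exact (smul_eq_zero.mp h).resolve_right hxy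
    have h2 : c 2 = 0 := by
      rw [h0, h1, zero_smul, zero_smul, zero_add, zero_add] at hc
      exact (smul_eq_zero.mp hc).resolve_right hxy
    intro i
    fin_cases i <;> assumption
  have hcard : Fintype.card (Fin 3) = Module.finrank k H := by
    rw [hdim]
    simp
  let b := basisOfLinearIndependentOfCardEqFinrank hli hcard
  have hb : ⇑b = ![x, y, ⁅x, y⁆] := coe_basisOfLinearIndependentOfCardEqFinrank hli hcard
  refine ⟨b, ?_, ?_, ?_⟩
  · rw [show b 0 = x from by rw [hb]; rfl, show b 1 = y from by rw [hb]; rfl,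
      show b 2 = ⁅x, y⁆ from by rw [hb]; rfl]
  · rw [show b 2 = ⁅x, y⁆ from by rw [hb]; rfl]
    exact hzc
  · rw [show b 2 = ⁅x, y⁆ from by rw [hb]; rfl]
    exact hxy

/-- The bracket of `H(1)` in coordinates. -/
lemma heis_bracket (b : Basis (Fin 3) k H) (hxy : ⁅b 0, b 1⁆ = b 2)
    (hz : ∀ u : H, ⁅u, b 2⁆ = 0) (u v : H) :
    ⁅u, v⁆ = (b.repr u 0 * b.repr v 1 - b.repr u 1 * b.repr v 0) • b 2 := by
  have hzl : ∀ w : H, ⁅b 2, w⁆ = 0 := fun w => by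
    have h := lie_skew w (b 2)
    rw [hz w] at h
    exact neg_eq_zero.mp h
  have h10 : ⁅b 1, b 0⁆ = -b 2 := by
    have h := lie_skew (b 0) (b 1)
    rw [hxy] at h
    exact neg_eq_iff_eq_neg.mp h
  conv_lhs => rw [← b.sum_repr u, ← b.sum_repr v]
  rw [Fin.sum_univ_three, Fin.sum_univ_three]
  simp only [add_lie, lie_add, smul_lie, lie_smul, lie_self, hxy, h10, hz, hzl,
    smul_zero, zero_add, add_zero, smul_neg]
  module

lemma repr3' (b : Basis (Fin 3) k M) (w : M) :
    b.coord 0 w • b 0 + b.coord 1 w • b 1 + b.coord 2 w • b 2 = w := by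
  have h := b.sum_repr w
  rw [Fin.sum_univ_three] at h
  simpa [Basis.coord_apply] using h

lemma repr1' (cA : Basis (Fin 1) k M) (w : M) : cA.coord 0 w • cA 0 = w := by
  have h := cA.sum_repr w
  rwa [Fin.sum_univ_one, ← Basis.coord_apply] at h

variable {A : Type u} [AddCommGroup A] [Module k A]

/-- The 2-cocycle on `H × A` detecting the full Schur multiplier. -/
noncomputable def omegaHA {H : Type u} [AddCommGroup H] [Module k H]
    (b : Basis (Fin 3) k H) (cA : Basis (Fin 1) k A) :
    (H × A) →ₗ[k] (H × A) →ₗ[k] (Fin 4 → k) :=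
  omega4 ((b.coord 0).comp (LinearMap.fst k H A))
    ((b.coord 1).comp (LinearMap.fst k H A))
    ((b.coord 2).comp (LinearMap.fst k H A))
    ((cA.coord 0).comp (LinearMap.snd k H A))

@[simp] lemma omegaHA_apply {H : Type u} [AddCommGroup H] [Module k H]
    (b : Basis (Fin 3) k H) (cA : Basis (Fin 1) k A) (u v : H × A) :
    omegaHA b cA u v =
      ![b.coord 0 u.1 * b.coord 2 v.1 - b.coord 2 u.1 * b.coord 0 v.1,
        b.coord 1 u.1 * b.coord 2 v.1 - b.coord 2 u.1 * b.coord 1 v.1,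
        b.coord 0 u.1 * cA.coord 0 v.2 - cA.coord 0 u.2 * b.coord 0 v.1,
        b.coord 1 u.1 * cA.coord 0 v.2 - cA.coord 0 u.2 * b.coord 1 v.1] := rfl

end HeisAux

/-- `H(1) ⊕ A(1)` is capable, its Schur multiplier has dimension `4`, and
the Schur multiplier of `(H(1) ⊕ A(1))/A(1) = H(1)` has dimension `2`. -/
theorem heisenberg_sum_line_capable (k : Type) [Field k] (H A : Type u) [LieRing H]
    [LieAlgebra k H] [LieRing A] [LieAlgebra k A] [Module.Finite k H] [Module.Finite k A]
    (hH : IsHeisenberg k H 1) (hA : IsLieAbelian A) (hAd : Module.finrank k A = 1) :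
    IsCapable k (H × A) ∧
    Module.finrank k (SchurMultiplier k (H × A)) = 4 ∧
    Module.finrank k (multOf k (H × A) (presQ k (H × A) (LieHom.ker (lieFst k H A)))) = 2 ∧
    Module.finrank k (SchurMultiplier k H) = 2 := by
  classical
  obtain ⟨b, hbxy, hbz, hbz0⟩ := heis_basis hH
  haveI : IsLieAbelian A := hA
  let cA : Basis (Fin 1) k A := Module.finBasisOfFinrankEq k A hAd
  -- coordinates
  have hco : ∀ i j : Fin 3, b.coord i (b j) = if j = i then 1 else 0 := by
    intro i j
    rw [Basis.coord_apply, Basis.repr_self]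
    exact Finsupp.single_apply
  have hcoA : cA.coord 0 (cA 0) = 1 := by
    rw [Basis.coord_apply, Basis.repr_self]
    simp
  -- the bracket of H in coordinates
  have hbrH : ∀ u v : H,
      ⁅u, v⁆ = (b.coord 0 u * b.coord 1 v - b.coord 1 u * b.coord 0 v) • b 2 := by
    intro u v
    rw [Basis.coord_apply, Basis.coord_apply, Basis.coord_apply, Basis.coord_apply]
    exact heis_bracket b hbxy hbz u v
  -- the central extension of H by k²
  have hω2skew : ∀ u : H, omega2 (b.coord 0) (b.coord 1) (b.coord 2) u u = 0 := by
    intro u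
    funext i
    fin_cases i <;> simp <;> ring
  have hω2coc : ∀ u v t : H,
      omega2 (b.coord 0) (b.coord 1) (b.coord 2) u ⁅v, t⁆ =
      omega2 (b.coord 0) (b.coord 1) (b.coord 2) ⁅u, v⁆ t +
      omega2 (b.coord 0) (b.coord 1) (b.coord 2) v ⁅u, t⁆ := by
    intro u v t
    rw [hbrH v t, hbrH u v, hbrH u t]
    funext i
    fin_cases i <;>
      simp [map_smul, LinearMap.smul_apply, Pi.smul_apply, hco, smul_eq_mul] <;> ring
  letI instE2R : LieRing (H × (Fin 2 → k)) :=
    extLieRing k H (Fin 2 → k) (omega2 (b.coord 0) (b.coord 1) (b.coord 2)) hω2skew hω2coc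
  letI instE2A : LieAlgebra k (H × (Fin 2 → k)) :=
    extLieAlgebra k H (Fin 2 → k) (omega2 (b.coord 0) (b.coord 1) (b.coord 2)) hω2skew hω2coc
  have hE2cent : ∀ e : H × (Fin 2 → k), e.1 = 0 →
      e ∈ LieAlgebra.center k (H × (Fin 2 → k)) := by
    intro e he
    refine (show ∀ x : H × (Fin 2 → k), ⁅x, e⁆ = 0 from fun x => ?_)
    show (⁅x.1, e.1⁆, omega2 (b.coord 0) (b.coord 1) (b.coord 2) x.1 e.1) = 0
    rw [he]
    simp [Prod.ext_iff]
  -- case 4 : the Schur multiplier of H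
  have hcase4 : Module.finrank k (SchurMultiplier k H) = 2 := by
    refine multOf_finrank_eq k H (pres k H) le_rfl 2
      ![⁅FreeLieAlgebra.of k (b 0), FreeLieAlgebra.of k (b 1)⁆,
        ⁅FreeLieAlgebra.of k (b 0), FreeLieAlgebra.of k (b 2)⁆,
        ⁅FreeLieAlgebra.of k (b 1), FreeLieAlgebra.of k (b 2)⁆]
      ?_ ?_ ?_ ?_ (H × (Fin 2 → k))
      (FreeLieAlgebra.lift k (fun u : H => ((u, 0) : H × (Fin 2 → k))))
      ?_ (LinearMap.snd k H (Fin 2 → k)) ?_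
    · -- all generators lie in the derived subalgebra
      intro i
      fin_cases i <;>
        exact LieSubmodule.lie_mem_lie (LieSubmodule.mem_top _) (LieSubmodule.mem_top _)
    · -- the last two generators lie in the kernel
      intro i
      fin_cases i
      · exact show ⁅FreeLieAlgebra.of k (b 0), FreeLieAlgebra.of k (b 2)⁆ ∈ (pres k H).ker by
          rw [LieHom.mem_ker, LieHom.map_lie, pres_of_apply, pres_of_apply]
          exact hbz _
      · exact show ⁅FreeLieAlgebra.of k (b 1), FreeLieAlgebra.of k (b 2)⁆ ∈ (pres k H).ker by
          rw [LieHom.mem_ker, LieHom.map_lie, pres_of_apply, pres_of_apply]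
          exact hbz _
    · -- the first generator does not
      simp only [Matrix.cons_val_zero]
      rw [LieHom.map_lie, pres_of_apply, pres_of_apply, hbxy]
      exact hbz0
    · -- spanning
      intro u v
      have hu : FreeLieAlgebra.of k u -
          (b.coord 0 u • FreeLieAlgebra.of k (b 0) + b.coord 1 u • FreeLieAlgebra.of k (b 1) +
            b.coord 2 u • FreeLieAlgebra.of k (b 2)) ∈ (pres k H).ker := by
        rw [LieHom.mem_ker, map_sub, pres_of_apply]
        simp only [map_add, map_smul, pres_of_apply]
        rw [repr3' b u, sub_self]
      have hv : FreeLieAlgebra.of k v -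
          (b.coord 0 v • FreeLieAlgebra.of k (b 0) + b.coord 1 v • FreeLieAlgebra.of k (b 1) +
            b.coord 2 v • FreeLieAlgebra.of k (b 2)) ∈ (pres k H).ker := by
        rw [LieHom.mem_ker, map_sub, pres_of_apply]
        simp only [map_add, map_smul, pres_of_apply]
        rw [repr3' b v, sub_self]
      have key : ⁅FreeLieAlgebra.of k u, FreeLieAlgebra.of k v⁆ =
          (⁅FreeLieAlgebra.of k u -
            (b.coord 0 u • FreeLieAlgebra.of k (b 0) + b.coord 1 u • FreeLieAlgebra.of k (b 1) +
              b.coord 2 u • FreeLieAlgebra.of k (b 2)), FreeLieAlgebra.of k v⁆ +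
          ⁅(b.coord 0 u • FreeLieAlgebra.of k (b 0) + b.coord 1 u • FreeLieAlgebra.of k (b 1) +
              b.coord 2 u • FreeLieAlgebra.of k (b 2)), FreeLieAlgebra.of k v -
            (b.coord 0 v • FreeLieAlgebra.of k (b 0) + b.coord 1 v • FreeLieAlgebra.of k (b 1) +
              b.coord 2 v • FreeLieAlgebra.of k (b 2))⁆) +
          ⁅(b.coord 0 u • FreeLieAlgebra.of k (b 0) + b.coord 1 u • FreeLieAlgebra.of k (b 1) +
              b.coord 2 u • FreeLieAlgebra.of k (b 2)),
            (b.coord 0 v • FreeLieAlgebra.of k (b 0) + b.coord 1 v • FreeLieAlgebra.of k (b 1) +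
              b.coord 2 v • FreeLieAlgebra.of k (b 2))⁆ := by
        rw [sub_lie, lie_sub]
        abel
      rw [key]
      refine add_mem (Submodule.mem_sup_right (add_mem ?_ ?_)) ?_
      · exact (LieSubmodule.mem_toSubmodule _).mpr
          (LieSubmodule.lie_mem_lie hu (LieSubmodule.mem_top _))
      · exact (LieSubmodule.mem_toSubmodule _).mpr
          (lie_mem_lie_right hv (LieSubmodule.mem_top _))
      · -- the expansion of the bracket of the two combinations
        have hm01 : ⁅FreeLieAlgebra.of k (b 0), FreeLieAlgebra.of k (b 1)⁆ ∈
            Submodule.span k (Set.range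
              ![⁅FreeLieAlgebra.of k (b 0), FreeLieAlgebra.of k (b 1)⁆,
                ⁅FreeLieAlgebra.of k (b 0), FreeLieAlgebra.of k (b 2)⁆,
                ⁅FreeLieAlgebra.of k (b 1), FreeLieAlgebra.of k (b 2)⁆]) :=
          Submodule.subset_span ⟨0, rfl⟩
        have hm02 : ⁅FreeLieAlgebra.of k (b 0), FreeLieAlgebra.of k (b 2)⁆ ∈
            Submodule.span k (Set.range
              ![⁅FreeLieAlgebra.of k (b 0), FreeLieAlgebra.of k (b 1)⁆,
                ⁅FreeLieAlgebra.of k (b 0), FreeLieAlgebra.of k (b 2)⁆,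
                ⁅FreeLieAlgebra.of k (b 1), FreeLieAlgebra.of k (b 2)⁆]) :=
          Submodule.subset_span ⟨1, rfl⟩
        have hm12 : ⁅FreeLieAlgebra.of k (b 1), FreeLieAlgebra.of k (b 2)⁆ ∈
            Submodule.span k (Set.range
              ![⁅FreeLieAlgebra.of k (b 0), FreeLieAlgebra.of k (b 1)⁆,
                ⁅FreeLieAlgebra.of k (b 0), FreeLieAlgebra.of k (b 2)⁆,
                ⁅FreeLieAlgebra.of k (b 1), FreeLieAlgebra.of k (b 2)⁆]) :=
          Submodule.subset_span ⟨2, rfl⟩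
        have hm10 : ⁅FreeLieAlgebra.of k (b 1), FreeLieAlgebra.of k (b 0)⁆ ∈
            Submodule.span k (Set.range
              ![⁅FreeLieAlgebra.of k (b 0), FreeLieAlgebra.of k (b 1)⁆,
                ⁅FreeLieAlgebra.of k (b 0), FreeLieAlgebra.of k (b 2)⁆,
                ⁅FreeLieAlgebra.of k (b 1), FreeLieAlgebra.of k (b 2)⁆]) := by
          rw [lie_comm_neg (R := k) (FreeLieAlgebra.of k (b 1)) (FreeLieAlgebra.of k (b 0))]
          exact neg_mem hm01
        have hm20 : ⁅FreeLieAlgebra.of k (b 2), FreeLieAlgebra.of k (b 0)⁆ ∈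
            Submodule.span k (Set.range
              ![⁅FreeLieAlgebra.of k (b 0), FreeLieAlgebra.of k (b 1)⁆,
                ⁅FreeLieAlgebra.of k (b 0), FreeLieAlgebra.of k (b 2)⁆,
                ⁅FreeLieAlgebra.of k (b 1), FreeLieAlgebra.of k (b 2)⁆]) := by
          rw [lie_comm_neg (R := k) (FreeLieAlgebra.of k (b 2)) (FreeLieAlgebra.of k (b 0))]
          exact neg_mem hm02
        have hm21 : ⁅FreeLieAlgebra.of k (b 2), FreeLieAlgebra.of k (b 1)⁆ ∈
            Submodule.span k (Set.range
              ![⁅FreeLieAlgebra.of k (b 0), FreeLieAlgebra.of k (b 1)⁆,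
                ⁅FreeLieAlgebra.of k (b 0), FreeLieAlgebra.of k (b 2)⁆,
                ⁅FreeLieAlgebra.of k (b 1), FreeLieAlgebra.of k (b 2)⁆]) := by
          rw [lie_comm_neg (R := k) (FreeLieAlgebra.of k (b 2)) (FreeLieAlgebra.of k (b 1))]
          exact neg_mem hm12
        refine Submodule.mem_sup_left ?_
        simp only [lie_add, add_lie, flie_smul k H, smul_lie, lie_self, smul_zero, zero_add,
          add_zero]
        repeat'
          first
          | apply Submodule.add_mem
          | apply Submodule.smul_mem
        all_goals
          first
          | exact hm01
          | exact hm02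
          | exact hm12
          | exact hm10
          | exact hm20
          | exact hm21
    · -- the lift kills the kernel centrally
      intro f hf
      apply hE2cent
      have hcomp : (({ toLinearMap := LinearMap.fst k H (Fin 2 → k), map_lie' := rfl } :
          (H × (Fin 2 → k)) →ₗ⁅k⁆ H).comp
          (FreeLieAlgebra.lift k (fun u : H => ((u, 0) : H × (Fin 2 → k))))) = pres k H :=
        FreeLieAlgebra.hom_ext fun u => by
          rw [LieHom.comp_apply, FreeLieAlgebra.lift_of_apply, pres_of_apply]
          rfl
      have h1 := DFunLike.congr_fun hcomp f
      have h2 : (FreeLieAlgebra.lift k (fun u : H => ((u, 0) : H × (Fin 2 → k))) f).1 =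
          pres k H f := h1
      rw [h2]
      exact LieHom.mem_ker.mp hf
    · -- values of the detecting map
      intro i
      fin_cases i
      · show LinearMap.snd k H (Fin 2 → k)
            (FreeLieAlgebra.lift k (fun u : H => ((u, 0) : H × (Fin 2 → k)))
              ⁅FreeLieAlgebra.of k (b 0), FreeLieAlgebra.of k (b 2)⁆) = Pi.single 0 1
        rw [LieHom.map_lie, FreeLieAlgebra.lift_of_apply, FreeLieAlgebra.lift_of_apply]
        show omega2 (b.coord 0) (b.coord 1) (b.coord 2) (b 0) (b 2) = _
        funext j
        fin_cases j <;> simp [hco, Pi.single_apply]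
      · show LinearMap.snd k H (Fin 2 → k)
            (FreeLieAlgebra.lift k (fun u : H => ((u, 0) : H × (Fin 2 → k)))
              ⁅FreeLieAlgebra.of k (b 1), FreeLieAlgebra.of k (b 2)⁆) = Pi.single 1 1
        rw [LieHom.map_lie, FreeLieAlgebra.lift_of_apply, FreeLieAlgebra.lift_of_apply]
        show omega2 (b.coord 0) (b.coord 1) (b.coord 2) (b 1) (b 2) = _
        funext j
        fin_cases j <;> simp [hco, Pi.single_apply]
  -- the Lie algebra structure of H × A in coordinates
  have hbrL : ∀ u v : H × A, ⁅u, v⁆ =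
      (b.coord 0 u.1 * b.coord 1 v.1 - b.coord 1 u.1 * b.coord 0 v.1) • ((b 2 : H), (0 : A)) := by
    intro u v
    have h1 := hbrH u.1 v.1
    have h2 : ⁅u.2, v.2⁆ = (0 : A) := trivial_lie_zero _ _ _ _
    show (⁅u.1, v.1⁆, ⁅u.2, v.2⁆) = _
    rw [h1, h2, Prod.smul_mk, smul_zero]
  have hZLne : ((b 2 : H), (0 : A)) ≠ (0 : H × A) := by
    intro h
    exact hbz0 (congrArg Prod.fst h)
  have hXY : ⁅((b 0 : H), (0 : A)), (((b 1 : H), (0 : A)) : H × A)⁆ = ((b 2 : H), (0 : A)) := by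
    rw [hbrL]
    simp [hco]
  have hXZ : ⁅((b 0 : H), (0 : A)), (((b 2 : H), (0 : A)) : H × A)⁆ = 0 := by
    rw [hbrL]
    simp [hco]
  have hYZ : ⁅((b 1 : H), (0 : A)), (((b 2 : H), (0 : A)) : H × A)⁆ = 0 := by
    rw [hbrL]
    simp [hco]
  have hXW : ⁅((b 0 : H), (0 : A)), ((((0 : H), cA 0) : H × A) : H × A)⁆ = 0 := by
    rw [hbrL]
    simp [hco]
  have hYW : ⁅((b 1 : H), (0 : A)), ((((0 : H), cA 0) : H × A) : H × A)⁆ = 0 := by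
    rw [hbrL]
    simp [hco]
  have hreprL : ∀ u : H × A, u = b.coord 0 u.1 • ((b 0 : H), (0 : A)) + b.coord 1 u.1 • ((b 1 : H), (0 : A)) +
      b.coord 2 u.1 • ((b 2 : H), (0 : A)) + cA.coord 0 u.2 • (((0 : H), cA 0) : H × A) := by
    intro u
    have h1 := repr3' b u.1
    have h2 := repr1' cA u.2
    refine Prod.ext_iff.mpr ⟨?_, ?_⟩
    · simp only [Prod.fst_add, Prod.smul_fst, smul_zero, add_zero]
      exact h1.symm
    · simp only [Prod.snd_add, Prod.smul_snd, smul_zero, zero_add]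
      exact h2.symm
  -- the 4-dimensional cocycle on H × A
  have hω4skew : ∀ u : H × A, omegaHA b cA u u = 0 := by
    intro u
    funext i
    fin_cases i <;> simp <;> ring
  have hω4coc : ∀ u v t : H × A, omegaHA b cA u ⁅v, t⁆ = omegaHA b cA ⁅u, v⁆ t + omegaHA b cA v ⁅u, t⁆ := by
    intro u v t
    rw [hbrL v t, hbrL u v, hbrL u t]
    funext i
    fin_cases i <;>
      simp [map_smul, LinearMap.smul_apply, Pi.smul_apply, hco, smul_eq_mul, smul_zero,
        map_zero] <;> ring
  letI instE1R : LieRing ((H × A) × (Fin 4 → k)) :=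
    extLieRing k (H × A) (Fin 4 → k) (omegaHA b cA) hω4skew hω4coc
  letI instE1A : LieAlgebra k ((H × A) × (Fin 4 → k)) :=
    extLieAlgebra k (H × A) (Fin 4 → k) (omegaHA b cA) hω4skew hω4coc
  have hE1cent : ∀ e : (H × A) × (Fin 4 → k), e.1 = 0 →
      e ∈ LieAlgebra.center k ((H × A) × (Fin 4 → k)) := by
    intro e he
    refine (show ∀ x : (H × A) × (Fin 4 → k), ⁅x, e⁆ = 0 from fun x => ?_)
    show (⁅x.1, e.1⁆, omegaHA b cA x.1 e.1) = 0
    rw [he]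
    simp [Prod.ext_iff]
  -- kernel facts in the free Lie algebra over H × A
  have hXZker : ⁅FreeLieAlgebra.of k ((b 0 : H), (0 : A)), FreeLieAlgebra.of k ((b 2 : H), (0 : A))⁆ ∈ (pres k (H × A)).ker := by
    rw [LieHom.mem_ker, LieHom.map_lie, pres_of_apply, pres_of_apply]
    exact hXZ
  have hYZker : ⁅FreeLieAlgebra.of k ((b 1 : H), (0 : A)), FreeLieAlgebra.of k ((b 2 : H), (0 : A))⁆ ∈ (pres k (H × A)).ker := by
    rw [LieHom.mem_ker, LieHom.map_lie, pres_of_apply, pres_of_apply]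
    exact hYZ
  have hXWker : ⁅FreeLieAlgebra.of k ((b 0 : H), (0 : A)), FreeLieAlgebra.of k (((0 : H), cA 0) : H × A)⁆ ∈ (pres k (H × A)).ker := by
    rw [LieHom.mem_ker, LieHom.map_lie, pres_of_apply, pres_of_apply]
    exact hXW
  have hYWker : ⁅FreeLieAlgebra.of k ((b 1 : H), (0 : A)), FreeLieAlgebra.of k (((0 : H), cA 0) : H × A)⁆ ∈ (pres k (H × A)).ker := by
    rw [LieHom.mem_ker, LieHom.map_lie, pres_of_apply, pres_of_apply]
    exact hYW
  have hZWdiff : FreeLieAlgebra.of k ((b 2 : H), (0 : A)) - ⁅FreeLieAlgebra.of k ((b 0 : H), (0 : A)), FreeLieAlgebra.of k ((b 1 : H), (0 : A))⁆ ∈ (pres k (H × A)).ker := by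
    rw [LieHom.mem_ker, map_sub, pres_of_apply, LieHom.map_lie, pres_of_apply,
      pres_of_apply, hXY, sub_self]
  have hZWT : ⁅FreeLieAlgebra.of k ((b 2 : H), (0 : A)), FreeLieAlgebra.of k (((0 : H), cA 0) : H × A)⁆ ∈
      (⁅(pres k (H × A)).ker, (⊤ : LieIdeal k (FreeLieAlgebra k (H × A)))⁆ :
        LieIdeal k (FreeLieAlgebra k (H × A))).toSubmodule := by
    have heq : ⁅FreeLieAlgebra.of k ((b 2 : H), (0 : A)), FreeLieAlgebra.of k (((0 : H), cA 0) : H × A)⁆ =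
        ⁅FreeLieAlgebra.of k ((b 2 : H), (0 : A)) - ⁅FreeLieAlgebra.of k ((b 0 : H), (0 : A)), FreeLieAlgebra.of k ((b 1 : H), (0 : A))⁆, FreeLieAlgebra.of k (((0 : H), cA 0) : H × A)⁆ +
        (⁅FreeLieAlgebra.of k ((b 0 : H), (0 : A)), ⁅FreeLieAlgebra.of k ((b 1 : H), (0 : A)), FreeLieAlgebra.of k (((0 : H), cA 0) : H × A)⁆⁆ - ⁅FreeLieAlgebra.of k ((b 1 : H), (0 : A)), ⁅FreeLieAlgebra.of k ((b 0 : H), (0 : A)), FreeLieAlgebra.of k (((0 : H), cA 0) : H × A)⁆⁆) := by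
      rw [sub_lie, lie_lie]
      abel
    rw [heq]
    refine add_mem ((LieSubmodule.mem_toSubmodule _).mpr
      (LieSubmodule.lie_mem_lie hZWdiff (LieSubmodule.mem_top _))) (sub_mem ?_ ?_)
    · exact (LieSubmodule.mem_toSubmodule _).mpr
        (lie_mem_lie_right hYWker (LieSubmodule.mem_top _))
    · exact (LieSubmodule.mem_toSubmodule _).mpr
        (lie_mem_lie_right hXWker (LieSubmodule.mem_top _))
  -- reusable representation fact in the free algebra
  have hufree : ∀ u : H × A, FreeLieAlgebra.of k u - (b.coord 0 u.1 • FreeLieAlgebra.of k ((b 0 : H), (0 : A)) +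
      b.coord 1 u.1 • FreeLieAlgebra.of k ((b 1 : H), (0 : A)) + b.coord 2 u.1 • FreeLieAlgebra.of k ((b 2 : H), (0 : A)) + cA.coord 0 u.2 • FreeLieAlgebra.of k (((0 : H), cA 0) : H × A)) ∈
      (pres k (H × A)).ker := by
    intro u
    rw [LieHom.mem_ker, map_sub, pres_of_apply]
    simp only [map_add, map_smul, pres_of_apply]
    rw [sub_eq_zero]
    exact hreprL u
  -- CASE 1 : the Schur multiplier of H × A has dimension 4
  have hcase1 : Module.finrank k (SchurMultiplier k (H × A)) = 4 := by
    refine multOf_finrank_eq k (H × A) (pres k (H × A)) le_rfl 4 ![⁅FreeLieAlgebra.of k ((b 0 : H), (0 : A)), FreeLieAlgebra.of k ((b 1 : H), (0 : A))⁆, ⁅FreeLieAlgebra.of k ((b 0 : H), (0 : A)), FreeLieAlgebra.of k ((b 2 : H), (0 : A))⁆, ⁅FreeLieAlgebra.of k ((b 1 : H), (0 : A)), FreeLieAlgebra.of k ((b 2 : H), (0 : A))⁆, ⁅FreeLieAlgebra.of k ((b 0 : H), (0 : A)), FreeLieAlgebra.of k (((0 : H), cA 0) : H × A)⁆, ⁅FreeLieAlgebra.of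 k ((b 1 : H), (0 : A)), FreeLieAlgebra.of k (((0 : H), cA 0) : H × A)⁆]
      ?_ ?_ ?_ ?_ ((H × A) × (Fin 4 → k))
      (FreeLieAlgebra.lift k (fun u : H × A => ((u, 0) : (H × A) × (Fin 4 → k))))
      ?_ (LinearMap.snd k (H × A) (Fin 4 → k)) ?_
    · intro i
      fin_cases i <;>
        exact LieSubmodule.lie_mem_lie (LieSubmodule.mem_top _) (LieSubmodule.mem_top _)
    · intro i
      fin_cases i
      · exact hXZker
      · exact hYZker
      · exact hXWker
      · exact hYWker
    · simp only [Matrix.cons_val_zero]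
      rw [LieHom.map_lie, pres_of_apply, pres_of_apply, hXY]
      exact hZLne
    · intro u v
      have hu := hufree u
      have hv := hufree v
      have key : ⁅FreeLieAlgebra.of k u, FreeLieAlgebra.of k v⁆ =
          (⁅FreeLieAlgebra.of k u - (b.coord 0 u.1 • FreeLieAlgebra.of k ((b 0 : H), (0 : A)) + b.coord 1 u.1 • FreeLieAlgebra.of k ((b 1 : H), (0 : A)) + b.coord 2 u.1 • FreeLieAlgebra.of k ((b 2 : H), (0 : A)) + cA.coord 0 u.2 • FreeLieAlgebra.of k (((0 : H), cA 0) : H × A)), FreeLieAlgebra.of k v⁆ +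
            ⁅(b.coord 0 u.1 • FreeLieAlgebra.of k ((b 0 : H), (0 : A)) + b.coord 1 u.1 • FreeLieAlgebra.of k ((b 1 : H), (0 : A)) + b.coord 2 u.1 • FreeLieAlgebra.of k ((b 2 : H), (0 : A)) + cA.coord 0 u.2 • FreeLieAlgebra.of k (((0 : H), cA 0) : H × A)), FreeLieAlgebra.of k v - (b.coord 0 v.1 • FreeLieAlgebra.of k ((b 0 : H), (0 : A)) + b.coord 1 v.1 • FreeLieAlgebra.of k ((b 1 : H), (0 : A)) + b.coord 2 v.1 • FreeLieAlgebra.of k ((b 2 : H), (0 : A)) + cA.coord 0 v.2 • FreeLieAlgebra.of k (((0 : H), cA 0) : H × A))⁆) + ⁅(b.coord 0 u.1 • FreeLieAlgebra.of k ((b 0 : H), (0 : A)) + b.coord 1 u.1 • FreeLieAlgebra.of k ((b 1 : H), (0 : A)) + b.coord 2 u.1 • FreeLieAlgebra.of k ((b 2 : H), (0 : A)) + cA.coord 0 u.2 • FreeLieAlgebra.of k (((0 : H), cA 0) : H × A)), (b.coord 0 v.1 • FreeLieAlgebra.of k ((b 0 : H), (0 : A)) + b.coord 1 v.1 • FreeLieAlgebra.of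 k ((b 1 : H), (0 : A)) + b.coord 2 v.1 • FreeLieAlgebra.of k ((b 2 : H), (0 : A)) + cA.coord 0 v.2 • FreeLieAlgebra.of k (((0 : H), cA 0) : H × A))⁆ := by
        rw [sub_lie, lie_sub]
        abel
      rw [key]
      refine add_mem (Submodule.mem_sup_right (add_mem
        ((LieSubmodule.mem_toSubmodule _).mpr
          (LieSubmodule.lie_mem_lie hu (LieSubmodule.mem_top _)))
        ((LieSubmodule.mem_toSubmodule _).mpr
          (lie_mem_lie_right hv (LieSubmodule.mem_top _))))) ?_
      have hm01 : ⁅FreeLieAlgebra.of k ((b 0 : H), (0 : A)), FreeLieAlgebra.of k ((b 1 : H), (0 : A))⁆ ∈ Submodule.span k (Set.range ![⁅FreeLieAlgebra.of k ((b 0 : H), (0 : A)), FreeLieAlgebra.of k ((b 1 : H), (0 : A))⁆, ⁅FreeLieAlgebra.of k ((b 0 : H), (0 : A)), FreeLieAlgebra.of k ((b 2 : H), (0 : A))⁆, ⁅FreeLieAlgebra.of k ((b 1 : H), (0 : A)), FreeLieAlgebra.of k ((b 2 : H), (0 : A))⁆, ⁅FreeLieAlgebra.of k ((b 0 : H), (0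 : A)), FreeLieAlgebra.of k (((0 : H), cA 0) : H × A)⁆, ⁅FreeLieAlgebra.of k ((b 1 : H), (0 : A)), FreeLieAlgebra.of k (((0 : H), cA 0) : H × A)⁆]) :=
        Submodule.subset_span ⟨0, rfl⟩
      have hm02 : ⁅FreeLieAlgebra.of k ((b 0 : H), (0 : A)), FreeLieAlgebra.of k ((b 2 : H), (0 : A))⁆ ∈ Submodule.span k (Set.range ![⁅FreeLieAlgebra.of k ((b 0 : H), (0 : A)), FreeLieAlgebra.of k ((b 1 : H), (0 : A))⁆, ⁅FreeLieAlgebra.of k ((b 0 : H), (0 : A)), FreeLieAlgebra.of k ((b 2 : H), (0 : A))⁆, ⁅FreeLieAlgebra.of k ((b 1 : H), (0 : A)), FreeLieAlgebra.of k ((b 2 : H), (0 : A))⁆, ⁅FreeLieAlgebra.of k ((b 0 : H), (0 : A)), FreeLieAlgebra.of k (((0 : H), cA 0) : H × A)⁆, ⁅FreeLieAlgebra.of k ((b 1 : H), (0 : A)), FreeLieAlgebra.of k (((0 : H), cA 0) : H × A)⁆]) :=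
        Submodule.subset_span ⟨1, rfl⟩
      have hm12 : ⁅FreeLieAlgebra.of k ((b 1 : H), (0 : A)), FreeLieAlgebra.of k ((b 2 : H), (0 : A))⁆ ∈ Submodule.span k (Set.range ![⁅FreeLieAlgebra.of k ((b 0 : H), (0 : A)), FreeLieAlgebra.of k ((b 1 : H), (0 : A))⁆, ⁅FreeLieAlgebra.of k ((b 0 : H), (0 : A)), FreeLieAlgebra.of k ((b 2 : H), (0 : A))⁆, ⁅FreeLieAlgebra.of k ((b 1 : H), (0 : A)), FreeLieAlgebra.of k ((b 2 : H), (0 : A))⁆, ⁅FreeLieAlgebra.of k ((b 0 : H), (0 : A)), FreeLieAlgebra.of k (((0 : H), cA 0) : H × A)⁆, ⁅FreeLieAlgebra.of k ((b 1 : H), (0 : A)), FreeLieAlgebra.of k (((0 : H), cA 0) : H × A)⁆]) :=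
        Submodule.subset_span ⟨2, rfl⟩
      have hm03 : ⁅FreeLieAlgebra.of k ((b 0 : H), (0 : A)), FreeLieAlgebra.of k (((0 : H), cA 0) : H × A)⁆ ∈ Submodule.span k (Set.range ![⁅FreeLieAlgebra.of k ((b 0 : H), (0 : A)), FreeLieAlgebra.of k ((b 1 : H), (0 : A))⁆, ⁅FreeLieAlgebra.of k ((b 0 : H), (0 : A)), FreeLieAlgebra.of k ((b 2 : H), (0 : A))⁆, ⁅FreeLieAlgebra.of k ((b 1 : H), (0 : A)), FreeLieAlgebra.of k ((b 2 : H), (0 : A))⁆, ⁅FreeLieAlgebra.of k ((b 0 : H), (0 : A)), FreeLieAlgebra.of k (((0 : H), cA 0) : H × A)⁆, ⁅FreeLieAlgebra.of k ((b 1 : H), (0 : A)), FreeLieAlgebra.of k (((0 : H), cA 0) : H × A)⁆]) :=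
        Submodule.subset_span ⟨3, rfl⟩
      have hm13 : ⁅FreeLieAlgebra.of k ((b 1 : H), (0 : A)), FreeLieAlgebra.of k (((0 : H), cA 0) : H × A)⁆ ∈ Submodule.span k (Set.range ![⁅FreeLieAlgebra.of k ((b 0 : H), (0 : A)), FreeLieAlgebra.of k ((b 1 : H), (0 : A))⁆, ⁅FreeLieAlgebra.of k ((b 0 : H), (0 : A)), FreeLieAlgebra.of k ((b 2 : H), (0 : A))⁆, ⁅FreeLieAlgebra.of k ((b 1 : H), (0 : A)), FreeLieAlgebra.of k ((b 2 : H), (0 : A))⁆, ⁅FreeLieAlgebra.of k ((b 0 : H), (0 : A)), FreeLieAlgebra.of k (((0 : H), cA 0) : H × A)⁆, ⁅FreeLieAlgebra.of k ((b 1 : H), (0 : A)), FreeLieAlgebra.of k (((0 : H), cA 0) : H × A)⁆]) :=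
        Submodule.subset_span ⟨4, rfl⟩
      have hm10 : ⁅FreeLieAlgebra.of k ((b 1 : H), (0 : A)), FreeLieAlgebra.of k ((b 0 : H), (0 : A))⁆ ∈ Submodule.span k (Set.range ![⁅FreeLieAlgebra.of k ((b 0 : H), (0 : A)), FreeLieAlgebra.of k ((b 1 : H), (0 : A))⁆, ⁅FreeLieAlgebra.of k ((b 0 : H), (0 : A)), FreeLieAlgebra.of k ((b 2 : H), (0 : A))⁆, ⁅FreeLieAlgebra.of k ((b 1 : H), (0 : A)), FreeLieAlgebra.of k ((b 2 : H), (0 : A))⁆, ⁅FreeLieAlgebra.of k ((b 0 : H), (0 : A)), FreeLieAlgebra.of k (((0 : H), cA 0) : H × A)⁆, ⁅FreeLieAlgebra.of k ((b 1 : H), (0 : A)), FreeLieAlgebra.of k (((0 : H), cA 0) : H × A)⁆]) := by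
        rw [lie_comm_neg (R := k) (FreeLieAlgebra.of k ((b 1 : H), (0 : A))) (FreeLieAlgebra.of k ((b 0 : H), (0 : A)))]
        exact neg_mem hm01
      have hm20 : ⁅FreeLieAlgebra.of k ((b 2 : H), (0 : A)), FreeLieAlgebra.of k ((b 0 : H), (0 : A))⁆ ∈ Submodule.span k (Set.range ![⁅FreeLieAlgebra.of k ((b 0 : H), (0 : A)), FreeLieAlgebra.of k ((b 1 : H), (0 : A))⁆, ⁅FreeLieAlgebra.of k ((b 0 : H), (0 : A)), FreeLieAlgebra.of k ((b 2 : H), (0 : A))⁆, ⁅FreeLieAlgebra.of k ((b 1 : H), (0 : A)), FreeLieAlgebra.of k ((b 2 : H), (0 : A))⁆, ⁅FreeLieAlgebra.of k ((b 0 : H), (0 : A)), FreeLieAlgebra.of k (((0 : H), cA 0) : H × A)⁆, ⁅FreeLieAlgebra.of k ((b 1 : H), (0 : A)), FreeLieAlgebra.of k (((0 : H), cA 0) : H × A)⁆]) := by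
        rw [lie_comm_neg (R := k) (FreeLieAlgebra.of k ((b 2 : H), (0 : A))) (FreeLieAlgebra.of k ((b 0 : H), (0 : A)))]
        exact neg_mem hm02
      have hm21 : ⁅FreeLieAlgebra.of k ((b 2 : H), (0 : A)), FreeLieAlgebra.of k ((b 1 : H), (0 : A))⁆ ∈ Submodule.span k (Set.range ![⁅FreeLieAlgebra.of k ((b 0 : H), (0 : A)), FreeLieAlgebra.of k ((b 1 : H), (0 : A))⁆, ⁅FreeLieAlgebra.of k ((b 0 : H), (0 : A)), FreeLieAlgebra.of k ((b 2 : H), (0 : A))⁆, ⁅FreeLieAlgebra.of k ((b 1 : H), (0 : A)), FreeLieAlgebra.of k ((b 2 : H), (0 : A))⁆, ⁅FreeLieAlgebra.of k ((b 0 : H), (0 : A)), FreeLieAlgebra.of k (((0 : H), cA 0) : H × A)⁆, ⁅FreeLieAlgebra.of k ((b 1 : H), (0 : A)), FreeLieAlgebra.of k (((0 : H), cA 0) : H × A)⁆]) := by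
        rw [lie_comm_neg (R := k) (FreeLieAlgebra.of k ((b 2 : H), (0 : A))) (FreeLieAlgebra.of k ((b 1 : H), (0 : A)))]
        exact neg_mem hm12
      have hm30 : ⁅FreeLieAlgebra.of k (((0 : H), cA 0) : H × A), FreeLieAlgebra.of k ((b 0 : H), (0 : A))⁆ ∈ Submodule.span k (Set.range ![⁅FreeLieAlgebra.of k ((b 0 : H), (0 : A)), FreeLieAlgebra.of k ((b 1 : H), (0 : A))⁆, ⁅FreeLieAlgebra.of k ((b 0 : H), (0 : A)), FreeLieAlgebra.of k ((b 2 : H), (0 : A))⁆, ⁅FreeLieAlgebra.of k ((b 1 : H), (0 : A)), FreeLieAlgebra.of k ((b 2 : H), (0 : A))⁆, ⁅FreeLieAlgebra.of k ((b 0 : H), (0 : A)), FreeLieAlgebra.of k (((0 : H), cA 0) : H × A)⁆, ⁅FreeLieAlgebra.of k ((b 1 : H), (0 : A)), FreeLieAlgebra.of k (((0 : H), cA 0) : H × A)⁆]) := by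
        rw [lie_comm_neg (R := k) (FreeLieAlgebra.of k (((0 : H), cA 0) : H × A)) (FreeLieAlgebra.of k ((b 0 : H), (0 : A)))]
        exact neg_mem hm03
      have hm31 : ⁅FreeLieAlgebra.of k (((0 : H), cA 0) : H × A), FreeLieAlgebra.of k ((b 1 : H), (0 : A))⁆ ∈ Submodule.span k (Set.range ![⁅FreeLieAlgebra.of k ((b 0 : H), (0 : A)), FreeLieAlgebra.of k ((b 1 : H), (0 : A))⁆, ⁅FreeLieAlgebra.of k ((b 0 : H), (0 : A)), FreeLieAlgebra.of k ((b 2 : H), (0 : A))⁆, ⁅FreeLieAlgebra.of k ((b 1 : H), (0 : A)), FreeLieAlgebra.of k ((b 2 : H), (0 : A))⁆, ⁅FreeLieAlgebra.of k ((b 0 : H), (0 : A)), FreeLieAlgebra.of k (((0 : H), cA 0) : H × A)⁆, ⁅FreeLieAlgebra.of k ((b 1 : H), (0 : A)), FreeLieAlgebra.of k (((0 : H), cA 0) : H × A)⁆]) := by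
        rw [lie_comm_neg (R := k) (FreeLieAlgebra.of k (((0 : H), cA 0) : H × A)) (FreeLieAlgebra.of k ((b 1 : H), (0 : A)))]
        exact neg_mem hm13
      have hm32 : ⁅FreeLieAlgebra.of k (((0 : H), cA 0) : H × A), FreeLieAlgebra.of k ((b 2 : H), (0 : A))⁆ ∈
          (⁅(pres k (H × A)).ker, (⊤ : LieIdeal k (FreeLieAlgebra k (H × A)))⁆ :
            LieIdeal k (FreeLieAlgebra k (H × A))).toSubmodule := by
        rw [lie_comm_neg (R := k) (FreeLieAlgebra.of k (((0 : H), cA 0) : H × A)) (FreeLieAlgebra.of k ((b 2 : H), (0 : A)))]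
        exact neg_mem hZWT
      simp only [lie_add, add_lie, flie_smul k (H × A), smul_lie, lie_self, smul_zero,
        zero_add, add_zero]
      repeat'
        first
        | apply Submodule.add_mem
        | apply Submodule.smul_mem
      all_goals
        first
        | exact Submodule.mem_sup_left hm01
        | exact Submodule.mem_sup_left hm02
        | exact Submodule.mem_sup_left hm12
        | exact Submodule.mem_sup_left hm03
        | exact Submodule.mem_sup_left hm13
        | exact Submodule.mem_sup_left hm10
        | exact Submodule.mem_sup_left hm20
        | exact Submodule.mem_sup_left hm21
        | exact Submodule.mem_sup_left hm30
        | exact Submodule.mem_sup_left hm31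
        | exact Submodule.mem_sup_right hZWT
        | exact Submodule.mem_sup_right hm32
    · intro f hf
      apply hE1cent
      have hcomp : (({ toLinearMap := LinearMap.fst k (H × A) (Fin 4 → k), map_lie' := rfl } :
          ((H × A) × (Fin 4 → k)) →ₗ⁅k⁆ (H × A)).comp
          (FreeLieAlgebra.lift k (fun u : H × A => ((u, 0) : (H × A) × (Fin 4 → k))))) =
          pres k (H × A) :=
        FreeLieAlgebra.hom_ext fun u => by
          rw [LieHom.comp_apply, FreeLieAlgebra.lift_of_apply, pres_of_apply]
          rfl
      have h2 : (FreeLieAlgebra.lift k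
          (fun u : H × A => ((u, 0) : (H × A) × (Fin 4 → k))) f).1 = pres k (H × A) f :=
        DFunLike.congr_fun hcomp f
      rw [h2]
      exact LieHom.mem_ker.mp hf
    · intro i
      fin_cases i
      · show LinearMap.snd k (H × A) (Fin 4 → k)
            (FreeLieAlgebra.lift k (fun u : H × A => ((u, 0) : (H × A) × (Fin 4 → k)))
              ⁅FreeLieAlgebra.of k ((b 0 : H), (0 : A)), FreeLieAlgebra.of k ((b 2 : H), (0 : A))⁆) = Pi.single 0 1
        rw [LieHom.map_lie, FreeLieAlgebra.lift_of_apply, FreeLieAlgebra.lift_of_apply]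
        show omegaHA b cA ((b 0 : H), (0 : A)) ((b 2 : H), (0 : A)) = _
        funext j
        fin_cases j <;> simp [hco, hcoA, Pi.single_apply]
      · show LinearMap.snd k (H × A) (Fin 4 → k)
            (FreeLieAlgebra.lift k (fun u : H × A => ((u, 0) : (H × A) × (Fin 4 → k)))
              ⁅FreeLieAlgebra.of k ((b 1 : H), (0 : A)), FreeLieAlgebra.of k ((b 2 : H), (0 : A))⁆) = Pi.single 1 1
        rw [LieHom.map_lie, FreeLieAlgebra.lift_of_apply, FreeLieAlgebra.lift_of_apply]
        show omegaHA b cA ((b 1 : H), (0 : A)) ((b 2 : H), (0 : A)) = _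
        funext j
        fin_cases j <;> simp [hco, hcoA, Pi.single_apply]
      · show LinearMap.snd k (H × A) (Fin 4 → k)
            (FreeLieAlgebra.lift k (fun u : H × A => ((u, 0) : (H × A) × (Fin 4 → k)))
              ⁅FreeLieAlgebra.of k ((b 0 : H), (0 : A)), FreeLieAlgebra.of k (((0 : H), cA 0) : H × A)⁆) = Pi.single 2 1
        rw [LieHom.map_lie, FreeLieAlgebra.lift_of_apply, FreeLieAlgebra.lift_of_apply]
        show omegaHA b cA ((b 0 : H), (0 : A)) (((0 : H), cA 0) : H × A) = _
        funext j
        fin_cases j <;> simp [hco, hcoA, Pi.single_apply]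
      · show LinearMap.snd k (H × A) (Fin 4 → k)
            (FreeLieAlgebra.lift k (fun u : H × A => ((u, 0) : (H × A) × (Fin 4 → k)))
              ⁅FreeLieAlgebra.of k ((b 1 : H), (0 : A)), FreeLieAlgebra.of k (((0 : H), cA 0) : H × A)⁆) = Pi.single 3 1
        rw [LieHom.map_lie, FreeLieAlgebra.lift_of_apply, FreeLieAlgebra.lift_of_apply]
        show omegaHA b cA ((b 1 : H), (0 : A)) (((0 : H), cA 0) : H × A) = _
        funext j
        fin_cases j <;> simp [hco, hcoA, Pi.single_apply]
  -- CASE 2 : the multiplier of the quotient (H × A)/A computed from the big presentation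
  have hcase2 : Module.finrank k (multOf k (H × A) (presQ k (H × A) (LieHom.ker (lieFst k H A)))) = 2 := by
    have hWN : ((((0 : H), cA 0) : H × A) : H × A) ∈ (LieHom.ker (lieFst k H A)) := LieHom.mem_ker.mpr rfl
    have hWker2 : FreeLieAlgebra.of k (((0 : H), cA 0) : H × A) ∈ (presQ k (H × A) (LieHom.ker (lieFst k H A))).ker := by
      rw [LieHom.mem_ker, presQ_of, lieQuotMk_eq_zero]
      exact hWN
    refine multOf_finrank_eq k (H × A) (presQ k (H × A) (LieHom.ker (lieFst k H A))) (ker_le_kerQ k (H × A) (LieHom.ker (lieFst k H A))) 2 ![⁅FreeLieAlgebra.of k ((b 0 : H), (0 : A)), FreeLieAlgebra.of k ((b 1 : H), (0 : A))⁆, ⁅FreeLieAlgebra.of k ((b 0 : H), (0 : A)), FreeLieAlgebra.of k ((b 2 : H), (0 : A))⁆, ⁅FreeLieAlgebra.of k ((b 1 : H), (0 : A)), FreeLieAlgebra.of k ((b 2 : H), (0 : A))⁆]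
      ?_ ?_ ?_ ?_ (H × (Fin 2 → k))
      (FreeLieAlgebra.lift k (fun u : H × A => ((u.1, 0) : H × (Fin 2 → k))))
      ?_ (LinearMap.snd k H (Fin 2 → k)) ?_
    · intro i
      fin_cases i <;>
        exact LieSubmodule.lie_mem_lie (LieSubmodule.mem_top _) (LieSubmodule.mem_top _)
    · intro i
      fin_cases i
      · exact show ⁅FreeLieAlgebra.of k ((b 0 : H), (0 : A)), FreeLieAlgebra.of k ((b 2 : H), (0 : A))⁆ ∈ (presQ k (H × A) (LieHom.ker (lieFst k H A))).ker by
          rw [LieHom.mem_ker, presQ, LieHom.comp_apply, LieHom.map_lie, pres_of_apply,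
            pres_of_apply, hXZ, map_zero]
      · exact show ⁅FreeLieAlgebra.of k ((b 1 : H), (0 : A)), FreeLieAlgebra.of k ((b 2 : H), (0 : A))⁆ ∈ (presQ k (H × A) (LieHom.ker (lieFst k H A))).ker by
          rw [LieHom.mem_ker, presQ, LieHom.comp_apply, LieHom.map_lie, pres_of_apply,
            pres_of_apply, hYZ, map_zero]
    · simp only [Matrix.cons_val_zero]
      rw [presQ, LieHom.comp_apply, LieHom.map_lie, pres_of_apply, pres_of_apply, hXY]
      intro hzero
      have hmem := (lieQuotMk_eq_zero k (H × A) (LieHom.ker (lieFst k H A)) _).mp hzero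
      have h2 : (b 2 : H) = 0 := LieHom.mem_ker.mp hmem
      exact hbz0 h2
    · intro u v
      have hu := ker_le_kerQ k (H × A) (LieHom.ker (lieFst k H A)) (hufree u)
      have hv := ker_le_kerQ k (H × A) (LieHom.ker (lieFst k H A)) (hufree v)
      have key : ⁅FreeLieAlgebra.of k u, FreeLieAlgebra.of k v⁆ =
          (⁅FreeLieAlgebra.of k u - (b.coord 0 u.1 • FreeLieAlgebra.of k ((b 0 : H), (0 : A)) + b.coord 1 u.1 • FreeLieAlgebra.of k ((b 1 : H), (0 : A)) + b.coord 2 u.1 • FreeLieAlgebra.of k ((b 2 : H), (0 : A)) + cA.coord 0 u.2 • FreeLieAlgebra.of k (((0 : H), cA 0) : H × A)), FreeLieAlgebra.of k v⁆ +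
            ⁅(b.coord 0 u.1 • FreeLieAlgebra.of k ((b 0 : H), (0 : A)) + b.coord 1 u.1 • FreeLieAlgebra.of k ((b 1 : H), (0 : A)) + b.coord 2 u.1 • FreeLieAlgebra.of k ((b 2 : H), (0 : A)) + cA.coord 0 u.2 • FreeLieAlgebra.of k (((0 : H), cA 0) : H × A)), FreeLieAlgebra.of k v - (b.coord 0 v.1 • FreeLieAlgebra.of k ((b 0 : H), (0 : A)) + b.coord 1 v.1 • FreeLieAlgebra.of k ((b 1 : H), (0 : A)) + b.coord 2 v.1 • FreeLieAlgebra.of k ((b 2 : H), (0 : A)) + cA.coord 0 v.2 • FreeLieAlgebra.of k (((0 : H), cA 0) : H × A))⁆) + ⁅(b.coord 0 u.1 • FreeLieAlgebra.of k ((b 0 : H), (0 : A)) + b.coord 1 u.1 • FreeLieAlgebra.of k ((b 1 : H), (0 : A)) + b.coord 2 u.1 • FreeLieAlgebra.of k ((b 2 : H), (0 : A)) + cA.coord 0 u.2 • FreeLieAlgebra.of k (((0 : H), cA 0) : H × A)), (b.coord 0 v.1 • FreeLieAlgebra.of k ((b 0 : H), (0 : A)) + b.coord 1 v.1 • FreeLieAlgebra.of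 k ((b 1 : H), (0 : A)) + b.coord 2 v.1 • FreeLieAlgebra.of k ((b 2 : H), (0 : A)) + cA.coord 0 v.2 • FreeLieAlgebra.of k (((0 : H), cA 0) : H × A))⁆ := by
        rw [sub_lie, lie_sub]
        abel
      rw [key]
      refine add_mem (Submodule.mem_sup_right (add_mem
        ((LieSubmodule.mem_toSubmodule _).mpr
          (LieSubmodule.lie_mem_lie hu (LieSubmodule.mem_top _)))
        ((LieSubmodule.mem_toSubmodule _).mpr
          (lie_mem_lie_right hv (LieSubmodule.mem_top _))))) ?_
      have hm01 : ⁅FreeLieAlgebra.of k ((b 0 : H), (0 : A)), FreeLieAlgebra.of k ((b 1 : H), (0 : A))⁆ ∈ Submodule.span k (Set.range ![⁅FreeLieAlgebra.of k ((b 0 : H), (0 : A)), FreeLieAlgebra.of k ((b 1 : H), (0 : A))⁆, ⁅FreeLieAlgebra.of k ((b 0 : H), (0 : A)), FreeLieAlgebra.of k ((b 2 : H), (0 : A))⁆, ⁅FreeLieAlgebra.of k ((b 1 : H), (0 : A)), FreeLieAlgebra.of k ((b 2 : H), (0 : A))⁆]) :=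
        Submodule.subset_span ⟨0, rfl⟩
      have hm02 : ⁅FreeLieAlgebra.of k ((b 0 : H), (0 : A)), FreeLieAlgebra.of k ((b 2 : H), (0 : A))⁆ ∈ Submodule.span k (Set.range ![⁅FreeLieAlgebra.of k ((b 0 : H), (0 : A)), FreeLieAlgebra.of k ((b 1 : H), (0 : A))⁆, ⁅FreeLieAlgebra.of k ((b 0 : H), (0 : A)), FreeLieAlgebra.of k ((b 2 : H), (0 : A))⁆, ⁅FreeLieAlgebra.of k ((b 1 : H), (0 : A)), FreeLieAlgebra.of k ((b 2 : H), (0 : A))⁆]) :=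
        Submodule.subset_span ⟨1, rfl⟩
      have hm12 : ⁅FreeLieAlgebra.of k ((b 1 : H), (0 : A)), FreeLieAlgebra.of k ((b 2 : H), (0 : A))⁆ ∈ Submodule.span k (Set.range ![⁅FreeLieAlgebra.of k ((b 0 : H), (0 : A)), FreeLieAlgebra.of k ((b 1 : H), (0 : A))⁆, ⁅FreeLieAlgebra.of k ((b 0 : H), (0 : A)), FreeLieAlgebra.of k ((b 2 : H), (0 : A))⁆, ⁅FreeLieAlgebra.of k ((b 1 : H), (0 : A)), FreeLieAlgebra.of k ((b 2 : H), (0 : A))⁆]) :=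
        Submodule.subset_span ⟨2, rfl⟩
      have hm10 : ⁅FreeLieAlgebra.of k ((b 1 : H), (0 : A)), FreeLieAlgebra.of k ((b 0 : H), (0 : A))⁆ ∈ Submodule.span k (Set.range ![⁅FreeLieAlgebra.of k ((b 0 : H), (0 : A)), FreeLieAlgebra.of k ((b 1 : H), (0 : A))⁆, ⁅FreeLieAlgebra.of k ((b 0 : H), (0 : A)), FreeLieAlgebra.of k ((b 2 : H), (0 : A))⁆, ⁅FreeLieAlgebra.of k ((b 1 : H), (0 : A)), FreeLieAlgebra.of k ((b 2 : H), (0 : A))⁆]) := by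
        rw [lie_comm_neg (R := k) (FreeLieAlgebra.of k ((b 1 : H), (0 : A))) (FreeLieAlgebra.of k ((b 0 : H), (0 : A)))]
        exact neg_mem hm01
      have hm20 : ⁅FreeLieAlgebra.of k ((b 2 : H), (0 : A)), FreeLieAlgebra.of k ((b 0 : H), (0 : A))⁆ ∈ Submodule.span k (Set.range ![⁅FreeLieAlgebra.of k ((b 0 : H), (0 : A)), FreeLieAlgebra.of k ((b 1 : H), (0 : A))⁆, ⁅FreeLieAlgebra.of k ((b 0 : H), (0 : A)), FreeLieAlgebra.of k ((b 2 : H), (0 : A))⁆, ⁅FreeLieAlgebra.of k ((b 1 : H), (0 : A)), FreeLieAlgebra.of k ((b 2 : H), (0 : A))⁆]) := by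
        rw [lie_comm_neg (R := k) (FreeLieAlgebra.of k ((b 2 : H), (0 : A))) (FreeLieAlgebra.of k ((b 0 : H), (0 : A)))]
        exact neg_mem hm02
      have hm21 : ⁅FreeLieAlgebra.of k ((b 2 : H), (0 : A)), FreeLieAlgebra.of k ((b 1 : H), (0 : A))⁆ ∈ Submodule.span k (Set.range ![⁅FreeLieAlgebra.of k ((b 0 : H), (0 : A)), FreeLieAlgebra.of k ((b 1 : H), (0 : A))⁆, ⁅FreeLieAlgebra.of k ((b 0 : H), (0 : A)), FreeLieAlgebra.of k ((b 2 : H), (0 : A))⁆, ⁅FreeLieAlgebra.of k ((b 1 : H), (0 : A)), FreeLieAlgebra.of k ((b 2 : H), (0 : A))⁆]) := by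
        rw [lie_comm_neg (R := k) (FreeLieAlgebra.of k ((b 2 : H), (0 : A))) (FreeLieAlgebra.of k ((b 1 : H), (0 : A)))]
        exact neg_mem hm12
      have hTW : ∀ x : FreeLieAlgebra k (H × A), ⁅FreeLieAlgebra.of k (((0 : H), cA 0) : H × A), x⁆ ∈
          (⁅(presQ k (H × A) (LieHom.ker (lieFst k H A))).ker, (⊤ : LieIdeal k (FreeLieAlgebra k (H × A)))⁆ :
            LieIdeal k (FreeLieAlgebra k (H × A))).toSubmodule := fun x =>
        (LieSubmodule.mem_toSubmodule _).mpr
          (LieSubmodule.lie_mem_lie hWker2 (LieSubmodule.mem_top _))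
      have hTW' : ∀ x : FreeLieAlgebra k (H × A), ⁅x, FreeLieAlgebra.of k (((0 : H), cA 0) : H × A)⁆ ∈
          (⁅(presQ k (H × A) (LieHom.ker (lieFst k H A))).ker, (⊤ : LieIdeal k (FreeLieAlgebra k (H × A)))⁆ :
            LieIdeal k (FreeLieAlgebra k (H × A))).toSubmodule := fun x =>
        (LieSubmodule.mem_toSubmodule _).mpr
          (lie_mem_lie_right hWker2 (LieSubmodule.mem_top _))
      simp only [lie_add, add_lie, flie_smul k (H × A), smul_lie, lie_self, smul_zero,
        zero_add, add_zero]
      repeat'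
        first
        | apply Submodule.add_mem
        | apply Submodule.smul_mem
      all_goals
        first
        | exact Submodule.mem_sup_left hm01
        | exact Submodule.mem_sup_left hm02
        | exact Submodule.mem_sup_left hm12
        | exact Submodule.mem_sup_left hm10
        | exact Submodule.mem_sup_left hm20
        | exact Submodule.mem_sup_left hm21
        | exact Submodule.mem_sup_right (hTW _)
        | exact Submodule.mem_sup_right (hTW' _)
    · intro f hf
      apply hE2cent
      have hcomp : (({ toLinearMap := LinearMap.fst k H (Fin 2 → k), map_lie' := rfl } :
          (H × (Fin 2 → k)) →ₗ⁅k⁆ H).comp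
          (FreeLieAlgebra.lift k (fun u : H × A => ((u.1, 0) : H × (Fin 2 → k))))) =
          (lieFst k H A).comp (pres k (H × A)) :=
        FreeLieAlgebra.hom_ext fun u => by
          rw [LieHom.comp_apply, LieHom.comp_apply, FreeLieAlgebra.lift_of_apply,
            pres_of_apply]
          rfl
      have h2 : (FreeLieAlgebra.lift k
          (fun u : H × A => ((u.1, 0) : H × (Fin 2 → k))) f).1 =
          lieFst k H A (pres k (H × A) f) := DFunLike.congr_fun hcomp f
      rw [h2]
      rw [LieHom.mem_ker, presQ, LieHom.comp_apply] at hf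
      have hmem := (lieQuotMk_eq_zero k (H × A) (LieHom.ker (lieFst k H A)) _).mp hf
      exact LieHom.mem_ker.mp hmem
    · intro i
      fin_cases i
      · show LinearMap.snd k H (Fin 2 → k)
            (FreeLieAlgebra.lift k (fun u : H × A => ((u.1, 0) : H × (Fin 2 → k)))
              ⁅FreeLieAlgebra.of k ((b 0 : H), (0 : A)), FreeLieAlgebra.of k ((b 2 : H), (0 : A))⁆) = Pi.single 0 1
        rw [LieHom.map_lie, FreeLieAlgebra.lift_of_apply, FreeLieAlgebra.lift_of_apply]
        show omega2 (b.coord 0) (b.coord 1) (b.coord 2) (b 0) (b 2) = _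
        funext j
        fin_cases j <;> simp [hco, Pi.single_apply]
      · show LinearMap.snd k H (Fin 2 → k)
            (FreeLieAlgebra.lift k (fun u : H × A => ((u.1, 0) : H × (Fin 2 → k)))
              ⁅FreeLieAlgebra.of k ((b 1 : H), (0 : A)), FreeLieAlgebra.of k ((b 2 : H), (0 : A))⁆) = Pi.single 1 1
        rw [LieHom.map_lie, FreeLieAlgebra.lift_of_apply, FreeLieAlgebra.lift_of_apply]
        show omega2 (b.coord 0) (b.coord 1) (b.coord 2) (b 1) (b 2) = _
        funext j
        fin_cases j <;> simp [hco, Pi.single_apply]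
  -- CAPABILITY
  have hcap : IsCapable k (H × A) := by
    have hcent2 : ∀ e : (H × A) × (Fin 4 → k),
        e ∈ LieAlgebra.center k ((H × A) × (Fin 4 → k)) → e.1 = 0 := by
      intro e he
      have hbr : ∀ x : (H × A) × (Fin 4 → k), ⁅x, e⁆ = 0 := he
      have hYe := hbr ((((b 1 : H), (0 : A)), 0) : (H × A) × (Fin 4 → k))
      have hXe := hbr ((((b 0 : H), (0 : A)), 0) : (H × A) × (Fin 4 → k))
      have hY1 : ⁅(((b 1 : H), (0 : A)) : H × A), e.1⁆ = 0 := congrArg Prod.fst hYe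
      have hY2 : omegaHA b cA ((b 1 : H), (0 : A)) e.1 = 0 := congrArg Prod.snd hYe
      have hX1 : ⁅(((b 0 : H), (0 : A)) : H × A), e.1⁆ = 0 := congrArg Prod.fst hXe
      rw [hbrL] at hY1 hX1
      have hc0 : b.coord 0 e.1.1 = 0 := by
        have h := (smul_eq_zero.mp hY1).resolve_right hZLne
        simpa [hco] using h
      have hc1 : b.coord 1 e.1.1 = 0 := by
        have h := (smul_eq_zero.mp hX1).resolve_right hZLne
        simpa [hco] using h
      have hc2 : b.coord 2 e.1.1 = 0 := by
        have h := congrFun hY2 1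
        simpa [hco] using h
      have hc3 : cA.coord 0 e.1.2 = 0 := by
        have h := congrFun hY2 3
        simpa [hco] using h
      have := hreprL e.1
      rw [hc0, hc1, hc2, hc3, zero_smul, zero_smul, zero_smul, zero_smul] at this
      simpa using this
    have hcker : LieAlgebra.center k ((H × A) × (Fin 4 → k)) ≤
        ({ toLinearMap := LinearMap.fst k (H × A) (Fin 4 → k), map_lie' := rfl } :
          ((H × A) × (Fin 4 → k)) →ₗ⁅k⁆ (H × A)).ker := by
      intro e he
      exact LieHom.mem_ker.mpr (hcent2 e he)
    refine ⟨(H × A) × (Fin 4 → k), instE1R, instE1A, ⟨?_⟩⟩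
    have hsurjf : Function.Surjective
        (lieQuotLift (LieAlgebra.center k ((H × A) × (Fin 4 → k))) _ hcker) := by
      intro l
      refine ⟨lieQuotMk k _ (LieAlgebra.center k ((H × A) × (Fin 4 → k))) ((l, 0)), ?_⟩
      rw [lieQuotLift_mk]
      rfl
    have hinjf : Function.Injective
        (lieQuotLift (LieAlgebra.center k ((H × A) × (Fin 4 → k))) _ hcker) := by
      intro a1 a2 h12
      obtain ⟨e1, rfl⟩ := Submodule.Quotient.mk_surjective _ a1
      obtain ⟨e2, rfl⟩ := Submodule.Quotient.mk_surjective _ a2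
      have hpe : e1.1 = e2.1 := h12
      have hdiff : (e1 - e2).1 = 0 := by
        show e1.1 - e2.1 = 0
        rw [hpe, sub_self]
      rw [Submodule.Quotient.eq]
      exact (LieSubmodule.mem_toSubmodule _).mpr (hE1cent _ hdiff)
    exact (LieEquiv.ofBijective _ ⟨hinjf, hsurjf⟩).symm
  exact ⟨hcap, hcase1, hcase2, hcase4⟩
end
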